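/- arXiv:2002.08053 — 5 statements merged into one kernel-verified Lean document; each statement's English description precedes it below -/
import Mathlib

section
/- Let c ≥ 2 and fix y ∈ Fin c. Let ℓ : (Fin c → ℝ) → (Fin c → ℝ) → ℝ be nonnegative such that for every a : Fin c → ℝ and i ∈ Fin c, ℓ(a, e^i) = 0 if and only if a = e^i. Let 𝒮 be a nonempty family of finsets of Fin c such that y ∈ S for every S ∈ 𝒮, and such that for every label ȳ ≠ y there exists S ∈ 𝒮 with ȳ ∉ S. If h : Fin c → ℝ satisfies: for every S ∈ 𝒮 there exists i ∈ S with ℓ(h, e^i) = 0, then h = e^y. -/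
/-- The identification step in the proof of Theorem 1: under the small ambiguity
degree condition, a vector achieving zero loss against some one-hot vector of each
candidate label set must be the one-hot vector of the true label `y`. -/
theorem identification_of_true_label
    (c : ℕ) (hc : 2 ≤ c) (y : Fin c)
    (ℓ : (Fin c → ℝ) → (Fin c → ℝ) → ℝ)
    (hℓnonneg : ∀ a b, 0 ≤ ℓ a b)
    (hℓzero : ∀ (a : Fin c → ℝ) (i : Fin c),
      ℓ a (fun j => if j = i then 1 else 0) = 0 ↔ a = (fun j => if j = i then 1 else 0))
    (𝒮 : Set (Finset (Fin c))) (h𝒮 : 𝒮.Nonempty)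
    (hy : ∀ S ∈ 𝒮, y ∈ S)
    (hamb : ∀ ybar : Fin c, ybar ≠ y → ∃ S ∈ 𝒮, ybar ∉ S)
    (h : Fin c → ℝ)
    (hh : ∀ S ∈ 𝒮, ∃ i ∈ S, ℓ h (fun j => if j = i then 1 else 0) = 0) :
    h = (fun j => if j = y then 1 else 0) := by
  obtain ⟨S, hS⟩ := h𝒮
  obtain ⟨i, hiS, hi0⟩ := hh S hS
  have hhi : h = (fun j => if j = i then 1 else 0) := (hℓzero h i).mp hi0
  by_cases hiy : i = y
  · rw [hhi, hiy]
  · obtain ⟨S', hS', hiS'⟩ := hamb i hiy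
    obtain ⟨j, hjS', hj0⟩ := hh S' hS'
    have hhj : h = (fun j' => if j' = j then 1 else 0) := (hℓzero h j).mp hj0
    have : i = j := by
      have := congrFun (hhi.symm.trans hhj) i
      simp at this
      by_contra hne
      simp [hne] at this
    exact absurd (this ▸ hjS') hiS'
end

section
/- Let n be a positive integer, let ι be a nonempty finite type, and let f₁, f₂ : ι → Fin n → ℝ. Then Rad(fun g i => min (f₁ g i) (f₂ g i)) ≤ Rad(f₁) + Rad(f₂), where for h : ι → Fin n → ℝ, Rad(h) := (1/2^n) · ∑_{σ : Fin n → Bool} max_{g ∈ ι} (1/n) · ∑_{i} ε_σ(i) · h g i, and ε_σ(i) = 1 if σ i = true and ε_σ(i) = −1 otherwise. -/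
set_option maxHeartbeats 1000000


open Finset

/-- The empirical Rademacher average of a family `h : ι → Fin n → ℝ`. -/
noncomputable def rad {ι : Type*} [Fintype ι] [Nonempty ι] (n : ℕ)
    (h : ι → Fin n → ℝ) : ℝ :=
  (1 / 2 ^ n) * ∑ σ : Fin n → Bool,
    Finset.univ.sup' Finset.univ_nonempty fun g =>
      (1 / n : ℝ) * ∑ i, (if σ i then (1 : ℝ) else -1) * h g i

section Aux

variable {ι : Type*} [Fintype ι] [Nonempty ι]

private lemma sup'_add_le' (f g : ι → ℝ) :
    univ.sup' univ_nonempty (fun x => f x + g x) ≤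
      univ.sup' univ_nonempty f + univ.sup' univ_nonempty g := by
  apply Finset.sup'_le
  intro x _
  exact add_le_add (Finset.le_sup' f (mem_univ x)) (Finset.le_sup' g (mem_univ x))

private lemma cmul_sup' (c : ℝ) (hc : 0 ≤ c) (f : ι → ℝ) :
    univ.sup' univ_nonempty (fun x => c * f x) = c * univ.sup' univ_nonempty f :=
  (Finset.comp_sup'_eq_sup'_comp univ_nonempty (fun x => c * x)
    (fun x y => mul_max_of_nonneg x y hc)).symm

/-- Key pairing inequality used in the contraction step for `|·|`. -/
private lemma sup'_pair (v R : ι → ℝ) :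
    univ.sup' univ_nonempty (fun g => |v g| + R g) +
      univ.sup' univ_nonempty (fun g => -|v g| + R g) ≤
    univ.sup' univ_nonempty (fun g => v g + R g) +
      univ.sup' univ_nonempty (fun g => -v g + R g) := by
  obtain ⟨g₁, -, h₁⟩ := Finset.exists_mem_eq_sup' univ_nonempty (fun g => |v g| + R g)
  obtain ⟨g₂, -, h₂⟩ := Finset.exists_mem_eq_sup' univ_nonempty (fun g => -|v g| + R g)
  rw [h₁, h₂]
  have A1 : v g₁ + R g₁ ≤ univ.sup' univ_nonempty (fun g => v g + R g) :=
    Finset.le_sup' (fun g => v g + R g) (mem_univ g₁)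
  have A2 : -v g₂ + R g₂ ≤ univ.sup' univ_nonempty (fun g => -v g + R g) :=
    Finset.le_sup' (fun g => -v g + R g) (mem_univ g₂)
  have B1 : v g₂ + R g₂ ≤ univ.sup' univ_nonempty (fun g => v g + R g) :=
    Finset.le_sup' (fun g => v g + R g) (mem_univ g₂)
  have B2 : -v g₁ + R g₁ ≤ univ.sup' univ_nonempty (fun g => -v g + R g) :=
    Finset.le_sup' (fun g => -v g + R g) (mem_univ g₁)
  have habs : |v g₁| - |v g₂| ≤ |v g₁ - v g₂| := abs_sub_abs_le_abs_sub _ _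
  rcases le_total (v g₂) (v g₁) with h | h
  · have : |v g₁ - v g₂| = v g₁ - v g₂ := abs_of_nonneg (by linarith)
    linarith
  · have h' : |v g₁ - v g₂| = v g₂ - v g₁ := by
      rw [abs_of_nonpos (by linarith : v g₁ - v g₂ ≤ 0)]; ring
    linarith

private lemma sup'_pair' (e : ℝ) (he : e = 1 ∨ e = -1) (v R : ι → ℝ) :
    univ.sup' univ_nonempty (fun g => e * |v g| + R g) +
      univ.sup' univ_nonempty (fun g => -e * |v g| + R g) ≤
    univ.sup' univ_nonempty (fun g => e * v g + R g) +
      univ.sup' univ_nonempty (fun g => -e * v g + R g) := by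
  rcases he with rfl | rfl
  · have h1 : (fun g => (1 : ℝ) * |v g| + R g) = fun g => |v g| + R g :=
      funext fun g => by ring
    have h2 : (fun g => -(1 : ℝ) * |v g| + R g) = fun g => -|v g| + R g :=
      funext fun g => by ring
    have h3 : (fun g => (1 : ℝ) * v g + R g) = fun g => v g + R g :=
      funext fun g => by ring
    have h4 : (fun g => -(1 : ℝ) * v g + R g) = fun g => -v g + R g :=
      funext fun g => by ring
    rw [h1, h2, h3, h4]
    exact sup'_pair v R
  · have h1 : (fun g => (-1 : ℝ) * |v g| + R g) = fun g => -|v g| + R g :=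
      funext fun g => by ring
    have h2 : (fun g => -(-1 : ℝ) * |v g| + R g) = fun g => |v g| + R g :=
      funext fun g => by ring
    have h3 : (fun g => (-1 : ℝ) * v g + R g) = fun g => -v g + R g :=
      funext fun g => by ring
    have h4 : (fun g => -(-1 : ℝ) * v g + R g) = fun g => v g + R g :=
      funext fun g => by ring
    rw [h1, h2, h3, h4]
    linarith [sup'_pair v R]

/-- Sign flip at one coordinate, as a permutation of `Fin n → Bool`. -/
private def flipAt {n : ℕ} (i : Fin n) : Equiv.Perm (Fin n → Bool) :=
  Function.Involutive.toPerm (fun σ => Function.update σ i (!σ i)) (by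
    intro σ
    funext j
    by_cases hj : j = i
    · subst hj; simp
    · simp [Function.update_of_ne hj])

private lemma flipAt_apply_self {n : ℕ} (i : Fin n) (σ : Fin n → Bool) :
    flipAt i σ i = !σ i := by
  simp [flipAt, Function.Involutive.toPerm]

private lemma flipAt_apply_ne {n : ℕ} (i : Fin n) (σ : Fin n → Bool) {j : Fin n}
    (hj : j ≠ i) : flipAt i σ j = σ j := by
  simp [flipAt, Function.Involutive.toPerm, Function.update_of_ne hj]

/-- Global sign flip, as a permutation of `Fin n → Bool`. -/
private def flipAll {n : ℕ} : Equiv.Perm (Fin n → Bool) :=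
  Function.Involutive.toPerm (fun σ i => !σ i) (by intro σ; funext j; simp)

private lemma flipAll_apply {n : ℕ} (σ : Fin n → Bool) (i : Fin n) :
    (flipAll σ) i = !σ i := rfl

private lemma sgn_not (b : Bool) :
    (if !b then (1 : ℝ) else -1) = -(if b then (1 : ℝ) else -1) := by
  cases b <;> simp

/-- Replacing `ε σ i` by `-ε σ i` everywhere leaves the sum over all `σ` unchanged. -/
private lemma sum_sup'_neg (n : ℕ) (w : ι → Fin n → ℝ) :
    (∑ σ : Fin n → Bool, univ.sup' univ_nonempty
        (fun g => ∑ i, -(if σ i then (1 : ℝ) else -1) * w g i)) =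
    ∑ σ : Fin n → Bool, univ.sup' univ_nonempty
        (fun g => ∑ i, (if σ i then (1 : ℝ) else -1) * w g i) := by
  rw [← Equiv.sum_comp (flipAll) (fun σ => univ.sup' univ_nonempty
        (fun g => ∑ i, (if σ i then (1 : ℝ) else -1) * w g i))]
  apply Finset.sum_congr rfl
  intro σ _
  congr 1
  funext g
  apply Finset.sum_congr rfl
  intro i _
  rw [flipAll_apply, sgn_not]

/-- Talagrand-type contraction for the absolute value, discrete version. -/
private lemma contraction (n : ℕ) (u : ι → Fin n → ℝ) :
    (∑ σ : Fin n → Bool, univ.sup' univ_nonempty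
        (fun g => ∑ i, (if σ i then (1 : ℝ) else -1) * |u g i|)) ≤
    ∑ σ : Fin n → Bool, univ.sup' univ_nonempty
        (fun g => ∑ i, (if σ i then (1 : ℝ) else -1) * u g i) := by
  suffices H : ∀ T : Finset (Fin n),
      (∑ σ : Fin n → Bool, univ.sup' univ_nonempty
        (fun g => (∑ i ∈ T, (if σ i then (1 : ℝ) else -1) * |u g i|) +
          ∑ i ∈ Tᶜ, (if σ i then (1 : ℝ) else -1) * u g i)) ≤
      ∑ σ : Fin n → Bool, univ.sup' univ_nonempty
        (fun g => ∑ i, (if σ i then (1 : ℝ) else -1) * u g i) by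
    have := H Finset.univ
    simpa using this
  intro T
  induction T using Finset.induction_on with
  | empty => simp
  | @insert i T hi ih =>
      refine le_trans ?_ ih
      -- abbreviations
      set R : (Fin n → Bool) → ι → ℝ := fun σ g =>
        (∑ j ∈ T, (if σ j then (1 : ℝ) else -1) * |u g j|) +
          ∑ j ∈ (insert i T)ᶜ, (if σ j then (1 : ℝ) else -1) * u g j with hR
      have hRflip : ∀ σ g, R (flipAt i σ) g = R σ g := by
        intro σ g
        simp only [hR]
        congr 1
        · exact Finset.sum_congr rfl fun j hj => by
            rw [flipAt_apply_ne i σ (fun h => hi (h ▸ hj))]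
        · refine Finset.sum_congr rfl fun j hj => ?_
          have : j ≠ i := by
            intro h; subst h
            exact (Finset.mem_compl.mp hj) (Finset.mem_insert_self j T)
          rw [flipAt_apply_ne i σ this]
      set F : (Fin n → Bool) → ℝ := fun σ => univ.sup' univ_nonempty
        (fun g => (if σ i then (1 : ℝ) else -1) * |u g i| + R σ g) with hF
      set G : (Fin n → Bool) → ℝ := fun σ => univ.sup' univ_nonempty
        (fun g => (if σ i then (1 : ℝ) else -1) * u g i + R σ g) with hG
      have hLHS : (∑ σ : Fin n → Bool, univ.sup' univ_nonempty
          (fun g => (∑ j ∈ insert i T, (if σ j then (1 : ℝ) else -1) * |u g j|) +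
            ∑ j ∈ (insert i T)ᶜ, (if σ j then (1 : ℝ) else -1) * u g j)) = ∑ σ, F σ := by
        refine Finset.sum_congr rfl fun σ _ => ?_
        congr 1
        funext g
        rw [Finset.sum_insert hi]
        simp only [hR]
        ring
      have hRHS : (∑ σ : Fin n → Bool, univ.sup' univ_nonempty
          (fun g => (∑ j ∈ T, (if σ j then (1 : ℝ) else -1) * |u g j|) +
            ∑ j ∈ Tᶜ, (if σ j then (1 : ℝ) else -1) * u g j)) = ∑ σ, G σ := by
        refine Finset.sum_congr rfl fun σ _ => ?_
        congr 1
        funext g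
        have hic : i ∉ (insert i T)ᶜ := by simp
        have hTc : Tᶜ = insert i (insert i T)ᶜ := by
          ext j
          by_cases hji : j = i
          · subst hji; simp [hi]
          · simp [hji]
        rw [hTc, Finset.sum_insert hic]
        simp only [hR]
        ring
      rw [hLHS, hRHS]
      -- pairing argument
      have key : ∀ σ, F σ + F (flipAt i σ) ≤ G σ + G (flipAt i σ) := by
        intro σ
        have hε : (if (flipAt i σ) i then (1 : ℝ) else -1) =
            -(if σ i then (1 : ℝ) else -1) := by
          rw [flipAt_apply_self, sgn_not]
        have hFσ : F (flipAt i σ) = univ.sup' univ_nonempty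
            (fun g => -(if σ i then (1 : ℝ) else -1) * |u g i| + R σ g) := by
          simp only [hF]
          exact congrArg _ (funext fun g => by rw [hε, hRflip])
        have hGσ : G (flipAt i σ) = univ.sup' univ_nonempty
            (fun g => -(if σ i then (1 : ℝ) else -1) * u g i + R σ g) := by
          simp only [hG]
          exact congrArg _ (funext fun g => by rw [hε, hRflip])
        rw [hFσ, hGσ]
        simp only [hF, hG]
        exact sup'_pair' (if σ i then (1 : ℝ) else -1)
          (by cases hσ : σ i <;> simp [hσ]) (fun g => u g i) (R σ)
      have hsumF : (∑ σ, F σ) = ∑ σ, F (flipAt i σ) := (Equiv.sum_comp (flipAt i) F).symm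
      have hsumG : (∑ σ, G σ) = ∑ σ, G (flipAt i σ) := (Equiv.sum_comp (flipAt i) G).symm
      have h2 : (∑ σ, F σ) + (∑ σ, F σ) ≤ (∑ σ, G σ) + (∑ σ, G σ) := by
        calc (∑ σ, F σ) + (∑ σ, F σ) = ∑ σ, (F σ + F (flipAt i σ)) := by
              rw [Finset.sum_add_distrib, ← hsumF]
          _ ≤ ∑ σ, (G σ + G (flipAt i σ)) := Finset.sum_le_sum fun σ _ => key σ
          _ = (∑ σ, G σ) + (∑ σ, G σ) := by rw [Finset.sum_add_distrib, ← hsumG]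
      linarith

private lemma min_eq (a b : ℝ) : min a b = (a + b - |a - b|) / 2 := by
  rcases le_total a b with h | h
  · rw [min_eq_left h, abs_of_nonpos (by linarith)]; ring
  · rw [min_eq_right h, abs_of_nonneg (by linarith)]; ring

/-- The core inequality, without normalization constants. -/
private lemma S_min_le (n : ℕ) (f₁ f₂ : ι → Fin n → ℝ) :
    (∑ σ : Fin n → Bool, univ.sup' univ_nonempty
        (fun g => ∑ i, (if σ i then (1 : ℝ) else -1) * min (f₁ g i) (f₂ g i))) ≤
    (∑ σ : Fin n → Bool, univ.sup' univ_nonempty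
        (fun g => ∑ i, (if σ i then (1 : ℝ) else -1) * f₁ g i)) +
    ∑ σ : Fin n → Bool, univ.sup' univ_nonempty
        (fun g => ∑ i, (if σ i then (1 : ℝ) else -1) * f₂ g i) := by
  set S₁ := ∑ σ : Fin n → Bool, univ.sup' univ_nonempty
      (fun g => ∑ i, (if σ i then (1 : ℝ) else -1) * f₁ g i) with hS₁
  set S₂ := ∑ σ : Fin n → Bool, univ.sup' univ_nonempty
      (fun g => ∑ i, (if σ i then (1 : ℝ) else -1) * f₂ g i) with hS₂
  set Tabs := ∑ σ : Fin n → Bool, univ.sup' univ_nonempty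
      (fun g => ∑ i, (if σ i then (1 : ℝ) else -1) * |f₁ g i - f₂ g i|) with hTabs
  -- Step 1: bound the LHS by (S₁ + S₂ + Tabs) / 2
  have step1 : (∑ σ : Fin n → Bool, univ.sup' univ_nonempty
      (fun g => ∑ i, (if σ i then (1 : ℝ) else -1) * min (f₁ g i) (f₂ g i))) ≤
      (1/2) * S₁ + ((1/2) * S₂ + (1/2) * Tabs) := by
    have e1 : (1/2 : ℝ) * S₁ = ∑ σ : Fin n → Bool,
        univ.sup' univ_nonempty (fun g => (1/2 : ℝ) * ∑ i,
          (if σ i then (1 : ℝ) else -1) * f₁ g i) := by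
      rw [hS₁, Finset.mul_sum]
      exact Finset.sum_congr rfl fun σ _ => (cmul_sup' (1/2 : ℝ) (by norm_num) _).symm
    have e2 : (1/2 : ℝ) * S₂ = ∑ σ : Fin n → Bool,
        univ.sup' univ_nonempty (fun g => (1/2 : ℝ) * ∑ i,
          (if σ i then (1 : ℝ) else -1) * f₂ g i) := by
      rw [hS₂, Finset.mul_sum]
      exact Finset.sum_congr rfl fun σ _ => (cmul_sup' (1/2 : ℝ) (by norm_num) _).symm
    have e3 : (1/2 : ℝ) * Tabs = ∑ σ : Fin n → Bool,
        univ.sup' univ_nonempty (fun g => ∑ i,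
          -(if σ i then (1 : ℝ) else -1) * ((1/2) * |f₁ g i - f₂ g i|)) := by
      rw [sum_sup'_neg n (fun g i => (1/2) * |f₁ g i - f₂ g i|), hTabs, Finset.mul_sum]
      refine Finset.sum_congr rfl fun σ _ => ?_
      rw [show (fun g => ∑ i, (if σ i then (1 : ℝ) else -1) * ((1/2) * |f₁ g i - f₂ g i|)) =
          (fun g => (1/2 : ℝ) * ∑ i, (if σ i then (1 : ℝ) else -1) * |f₁ g i - f₂ g i|) from
        funext fun g => by rw [Finset.mul_sum]; exact Finset.sum_congr rfl fun i _ => by ring]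
      rw [cmul_sup' (1/2 : ℝ) (by norm_num)]
    rw [e1, e2, e3, ← Finset.sum_add_distrib, ← Finset.sum_add_distrib]
    refine Finset.sum_le_sum fun σ _ => ?_
    have hdecomp : (fun g => ∑ i, (if σ i then (1 : ℝ) else -1) * min (f₁ g i) (f₂ g i)) =
        (fun g => ((1/2 : ℝ) * ∑ i, (if σ i then (1 : ℝ) else -1) * f₁ g i) +
          (((1/2 : ℝ) * ∑ i, (if σ i then (1 : ℝ) else -1) * f₂ g i) +
            ∑ i, -(if σ i then (1 : ℝ) else -1) * ((1/2) * |f₁ g i - f₂ g i|))) := by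
      funext g
      rw [Finset.mul_sum, Finset.mul_sum, ← Finset.sum_add_distrib,
        ← Finset.sum_add_distrib]
      refine Finset.sum_congr rfl fun i _ => ?_
      rw [min_eq]
      ring
    rw [hdecomp]
    exact le_trans (sup'_add_le' _ _) (add_le_add le_rfl (sup'_add_le' _ _))
  -- Step 2: Tabs ≤ S₁ + S₂
  have step2 : Tabs ≤ S₁ + S₂ := by
    refine le_trans (contraction n (fun g i => f₁ g i - f₂ g i)) ?_
    have hsplit : (∑ σ : Fin n → Bool, univ.sup' univ_nonempty
        (fun g => ∑ i, (if σ i then (1 : ℝ) else -1) * (f₁ g i - f₂ g i))) ≤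
        S₁ + ∑ σ : Fin n → Bool, univ.sup' univ_nonempty
          (fun g => ∑ i, -(if σ i then (1 : ℝ) else -1) * f₂ g i) := by
      rw [hS₁, ← Finset.sum_add_distrib]
      refine Finset.sum_le_sum fun σ _ => ?_
      rw [show (fun g => ∑ i, (if σ i then (1 : ℝ) else -1) * (f₁ g i - f₂ g i)) =
          (fun g => (∑ i, (if σ i then (1 : ℝ) else -1) * f₁ g i) +
            ∑ i, -(if σ i then (1 : ℝ) else -1) * f₂ g i) from ?_]
      · exact sup'_add_le' _ _
      · funext g
        rw [← Finset.sum_add_distrib]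
        exact Finset.sum_congr rfl fun i _ => by ring
    refine le_trans hsplit ?_
    rw [sum_sup'_neg n f₂, ← hS₂]
  linarith

end Aux

/-- Two-class case of Lemma 4: the Rademacher average of the pointwise minimum of
two families is bounded by the sum of their Rademacher averages. -/
theorem rad_min_le_add
    (n : ℕ) (hn : 0 < n) (ι : Type*) [Fintype ι] [Nonempty ι]
    (f₁ f₂ : ι → Fin n → ℝ) :
    rad n (fun g i => min (f₁ g i) (f₂ g i)) ≤ rad n f₁ + rad n f₂ := by
  have hrad : ∀ h : ι → Fin n → ℝ, rad n h = (1 / 2 ^ n) * ((1 / n : ℝ) *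
      ∑ σ : Fin n → Bool, univ.sup' univ_nonempty
        (fun g => ∑ i, (if σ i then (1 : ℝ) else -1) * h g i)) := by
    intro h
    rw [rad]
    congr 1
    rw [Finset.mul_sum]
    exact Finset.sum_congr rfl fun σ _ => cmul_sup' (1 / n : ℝ) (by positivity) _
  rw [hrad, hrad, hrad]
  have hS := S_min_le n f₁ f₂
  have hc : (0 : ℝ) ≤ (1 / 2 ^ n) * (1 / n : ℝ) := by positivity
  nlinarith [mul_le_mul_of_nonneg_left hS hc]
end

section
/- Let n and c be positive integers, let ι be a nonempty finite type, and let f : ι → Fin n → Fin c → ℝ. Then Rad(fun g i => min_{y ∈ Fin c} f g i y) ≤ ∑_{y ∈ Fin c} Rad(fun g i => f g i y), where for h : ι → Fin n → ℝ, Rad(h) := (1/2^n) · ∑_{σ : Fin n → Bool} max_{g ∈ ι} (1/n) · ∑_{i} ε_σ(i) · h g i, and ε_σ(i) = 1 if σ i = true and ε_σ(i) = −1 otherwise. -/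
open Finset

section aux
variable {ι : Type*} [Fintype ι] [Nonempty ι] {n : ℕ}

noncomputable def S (n : ℕ) (v : ι → Fin n → ℝ) : ℝ :=
  ∑ σ : Fin n → Bool,
    Finset.univ.sup' Finset.univ_nonempty fun g =>
      (1 / n : ℝ) * ∑ i, (if σ i then (1 : ℝ) else -1) * v g i

lemma key (a u : ι → ℝ) :
    (univ.sup' univ_nonempty fun g => a g + |u g|) +
      (univ.sup' univ_nonempty fun g => a g - |u g|) ≤
    (univ.sup' univ_nonempty fun g => a g + u g) +
      (univ.sup' univ_nonempty fun g => a g - u g) := by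
  obtain ⟨g₁, -, h₁⟩ := Finset.exists_mem_eq_sup' univ_nonempty (fun g => a g + |u g|)
  obtain ⟨g₂, -, h₂⟩ := Finset.exists_mem_eq_sup' univ_nonempty (fun g => a g - |u g|)
  rw [h₁, h₂]
  have habs : |u g₁| - |u g₂| ≤ |u g₁ - u g₂| := abs_sub_abs_le_abs_sub _ _
  rcases abs_cases (u g₁ - u g₂) with ⟨he, -⟩ | ⟨he, -⟩
  · have l1 : a g₁ + u g₁ ≤ univ.sup' univ_nonempty fun g => a g + u g :=
      Finset.le_sup' (fun g => a g + u g) (mem_univ g₁)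
    have l2 : a g₂ - u g₂ ≤ univ.sup' univ_nonempty fun g => a g - u g :=
      Finset.le_sup' (fun g => a g - u g) (mem_univ g₂)
    linarith
  · have l1 : a g₂ + u g₂ ≤ univ.sup' univ_nonempty fun g => a g + u g :=
      Finset.le_sup' (fun g => a g + u g) (mem_univ g₂)
    have l2 : a g₁ - u g₁ ≤ univ.sup' univ_nonempty fun g => a g - u g :=
      Finset.le_sup' (fun g => a g - u g) (mem_univ g₁)
    linarith
end aux

section aux2
variable {ι : Type*} [Fintype ι] [Nonempty ι] {n : ℕ}

lemma step (i0 : Fin n) (v w : ι → Fin n → ℝ)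
    (hvw : ∀ g i, i ≠ i0 → v g i = w g i)
    (hab : ∀ g, v g i0 = |w g i0|) :
    S n v ≤ S n w := by
  classical
  let e : (Fin n → Bool) → Fin n → ℝ := fun σ i => if σ i then (1:ℝ) else -1
  let flip : (Fin n → Bool) → (Fin n → Bool) := fun σ => Function.update σ i0 (!σ i0)
  have hinv : Function.Involutive flip := by
    intro σ; funext i
    by_cases h : i = i0
    · subst h; simp [flip, Function.update_self]
    · simp [flip, Function.update_of_ne h]
  let Fv : (Fin n → Bool) → ℝ := fun σ =>
    univ.sup' univ_nonempty fun g => (1/n : ℝ) * ∑ i, e σ i * v g i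
  let Fw : (Fin n → Bool) → ℝ := fun σ =>
    univ.sup' univ_nonempty fun g => (1/n : ℝ) * ∑ i, e σ i * w g i
  let A : (Fin n → Bool) → ι → ℝ := fun σ g => (1/n : ℝ) * ∑ i ∈ univ.erase i0, e σ i * w g i
  let U : ι → ℝ := fun g => (1/n : ℝ) * w g i0
  have hUabs : ∀ g, (1/n : ℝ) * |w g i0| = |U g| := by
    intro g
    have : |U g| = |(1/n : ℝ)| * |w g i0| := abs_mul _ _
    rw [this, abs_of_nonneg (by positivity : (0:ℝ) ≤ 1/(n:ℝ))]
  have heflip_ne : ∀ σ (i : Fin n), i ≠ i0 → e (flip σ) i = e σ i := by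
    intro σ i h; simp [e, flip, Function.update_of_ne h]
  have heflip : ∀ σ, e (flip σ) i0 = - e σ i0 := by
    intro σ; simp only [e, flip, Function.update_self]; cases σ i0 <;> simp
  have hAflip : ∀ σ g, A (flip σ) g = A σ g := by
    intro σ g
    refine congrArg _ (Finset.sum_congr rfl fun i hi => ?_)
    rw [heflip_ne σ i (Finset.mem_erase.mp hi).1]
  have hv_eq : ∀ σ g, (1/n : ℝ) * ∑ i, e σ i * v g i = A σ g + e σ i0 * |U g| := by
    intro σ g
    rw [← Finset.add_sum_erase univ (fun i => e σ i * v g i) (mem_univ i0)]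
    have h1 : ∑ i ∈ univ.erase i0, e σ i * v g i = ∑ i ∈ univ.erase i0, e σ i * w g i :=
      Finset.sum_congr rfl fun i hi => by rw [hvw g i (Finset.mem_erase.mp hi).1]
    rw [h1, hab g, mul_add, ← hUabs g]
    simp only [A]; ring
  have hw_eq : ∀ σ g, (1/n : ℝ) * ∑ i, e σ i * w g i = A σ g + e σ i0 * U g := by
    intro σ g
    rw [← Finset.add_sum_erase univ (fun i => e σ i * w g i) (mem_univ i0)]
    simp only [A, U, mul_add]; ring
  have h2 : ∀ σ, Fv σ + Fv (flip σ) ≤ Fw σ + Fw (flip σ) := by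
    intro σ
    have e1 : Fv σ = univ.sup' univ_nonempty fun g => A σ g + e σ i0 * |U g| :=
      Finset.sup'_congr univ_nonempty rfl fun g _ => hv_eq σ g
    have e2 : Fv (flip σ) = univ.sup' univ_nonempty fun g => A σ g - e σ i0 * |U g| :=
      Finset.sup'_congr univ_nonempty rfl fun g _ => by
        rw [hv_eq (flip σ) g, hAflip σ g, heflip σ]; ring
    have e3 : Fw σ = univ.sup' univ_nonempty fun g => A σ g + e σ i0 * U g :=
      Finset.sup'_congr univ_nonempty rfl fun g _ => hw_eq σ g
    have e4 : Fw (flip σ) = univ.sup' univ_nonempty fun g => A σ g - e σ i0 * U g :=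
      Finset.sup'_congr univ_nonempty rfl fun g _ => by
        rw [hw_eq (flip σ) g, hAflip σ g, heflip σ]; ring
    rw [e1, e2, e3, e4]
    by_cases hb : σ i0
    · have hone : e σ i0 = 1 := by simp [e, hb]
      simpa [hone] using key (A σ) U
    · have hone : e σ i0 = -1 := by simp [e, hb]
      have := key (A σ) U
      simp only [hone]
      have r1 : (univ.sup' univ_nonempty fun g => A σ g + -1 * |U g|) =
          univ.sup' univ_nonempty fun g => A σ g - |U g| :=
        Finset.sup'_congr univ_nonempty rfl fun g _ => by ring
      have r2 : (univ.sup' univ_nonempty fun g => A σ g - -1 * |U g|) =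
          univ.sup' univ_nonempty fun g => A σ g + |U g| :=
        Finset.sup'_congr univ_nonempty rfl fun g _ => by ring
      have r3 : (univ.sup' univ_nonempty fun g => A σ g + -1 * U g) =
          univ.sup' univ_nonempty fun g => A σ g - U g :=
        Finset.sup'_congr univ_nonempty rfl fun g _ => by ring
      have r4 : (univ.sup' univ_nonempty fun g => A σ g - -1 * U g) =
          univ.sup' univ_nonempty fun g => A σ g + U g :=
        Finset.sup'_congr univ_nonempty rfl fun g _ => by ring
      rw [r1, r2, r3, r4]; linarith
  have hsv : ∑ σ : Fin n → Bool, Fv (flip σ) = ∑ σ : Fin n → Bool, Fv σ :=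
    Fintype.sum_bijective flip hinv.bijective _ _ (fun σ => rfl)
  have hsw : ∑ σ : Fin n → Bool, Fw (flip σ) = ∑ σ : Fin n → Bool, Fw σ :=
    Fintype.sum_bijective flip hinv.bijective _ _ (fun σ => rfl)
  have hsum : ∑ σ : Fin n → Bool, (Fv σ + Fv (flip σ)) ≤
      ∑ σ : Fin n → Bool, (Fw σ + Fw (flip σ)) :=
    Finset.sum_le_sum fun σ _ => h2 σ
  rw [Finset.sum_add_distrib, Finset.sum_add_distrib, hsv, hsw] at hsum
  have hSv : S n v = ∑ σ : Fin n → Bool, Fv σ := rfl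
  have hSw : S n w = ∑ σ : Fin n → Bool, Fw σ := rfl
  rw [hSv, hSw]; linarith

end aux2

section aux3
variable {ι : Type*} [Fintype ι] [Nonempty ι] {n : ℕ}

lemma S_abs_le (u : ι → Fin n → ℝ) : S n (fun g i => |u g i|) ≤ S n u := by
  classical
  have main : ∀ T : Finset (Fin n),
      S n (fun g i => if i ∈ T then |u g i| else u g i) ≤ S n u := by
    intro T
    induction T using Finset.induction_on with
    | empty => simp
    | @insert i0 T hi0 ih =>
      refine le_trans (step i0 _ (fun g i => if i ∈ T then |u g i| else u g i) ?_ ?_) ih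
      · intro g i h
        simp [Finset.mem_insert, h]
      · intro g
        simp [Finset.mem_insert, hi0]
  have := main Finset.univ
  simpa using this

lemma S_neg_eq (u : ι → Fin n → ℝ) : S n (fun g i => -(u g i)) = S n u := by
  classical
  let flipAll : (Fin n → Bool) → (Fin n → Bool) := fun σ i => !σ i
  have hinv : Function.Involutive flipAll := by intro σ; funext i; simp [flipAll]
  refine Fintype.sum_bijective flipAll hinv.bijective _ _ fun σ => ?_
  refine Finset.sup'_congr univ_nonempty rfl fun g _ => ?_
  refine congrArg _ (Finset.sum_congr rfl fun i _ => ?_)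
  cases h : σ i <;> simp [flipAll, h]

lemma S_sub_le (p q : ι → Fin n → ℝ) :
    S n (fun g i => p g i - q g i) ≤ S n p + S n (fun g i => -(q g i)) := by
  rw [S, S, S, ← Finset.sum_add_distrib]
  refine Finset.sum_le_sum fun σ _ => ?_
  refine Finset.sup'_le _ _ fun g _ => ?_
  have h1 : (1/n : ℝ) * ∑ i, (if σ i then (1:ℝ) else -1) * p g i ≤
      univ.sup' univ_nonempty fun g => (1/n : ℝ) * ∑ i, (if σ i then (1:ℝ) else -1) * p g i :=
    Finset.le_sup' (fun g => (1/n : ℝ) * ∑ i, (if σ i then (1:ℝ) else -1) * p g i) (mem_univ g)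
  have h2 : (1/n : ℝ) * ∑ i, (if σ i then (1:ℝ) else -1) * (-(q g i)) ≤
      univ.sup' univ_nonempty fun g => (1/n : ℝ) * ∑ i, (if σ i then (1:ℝ) else -1) * (-(q g i)) :=
    Finset.le_sup' (fun g => (1/n : ℝ) * ∑ i, (if σ i then (1:ℝ) else -1) * (-(q g i))) (mem_univ g)
  have key : (1/n : ℝ) * ∑ i, (if σ i then (1:ℝ) else -1) * (p g i - q g i) =
      (1/n : ℝ) * ∑ i, (if σ i then (1:ℝ) else -1) * p g i +
      (1/n : ℝ) * ∑ i, (if σ i then (1:ℝ) else -1) * (-(q g i)) := by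
    rw [← mul_add, ← Finset.sum_add_distrib]
    refine congrArg _ (Finset.sum_congr rfl fun i _ => by ring)
  rw [key]; exact add_le_add h1 h2

lemma S_min_le_s6 (p q : ι → Fin n → ℝ) :
    S n (fun g i => min (p g i) (q g i)) ≤
      (1/2) * S n p + (1/2) * S n q + (1/2) * S n (fun g i => -|p g i - q g i|) := by
  rw [S, S, S, S, Finset.mul_sum, Finset.mul_sum, Finset.mul_sum,
    ← Finset.sum_add_distrib, ← Finset.sum_add_distrib]
  refine Finset.sum_le_sum fun σ _ => ?_
  refine Finset.sup'_le _ _ fun g _ => ?_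
  have h1 := Finset.le_sup' (fun g => (1/n : ℝ) * ∑ i, (if σ i then (1:ℝ) else -1) * p g i)
    (mem_univ g)
  have h2 := Finset.le_sup' (fun g => (1/n : ℝ) * ∑ i, (if σ i then (1:ℝ) else -1) * q g i)
    (mem_univ g)
  have h3 := Finset.le_sup'
    (fun g => (1/n : ℝ) * ∑ i, (if σ i then (1:ℝ) else -1) * (-|p g i - q g i|)) (mem_univ g)
  have key : (1/n : ℝ) * ∑ i, (if σ i then (1:ℝ) else -1) * min (p g i) (q g i) =
      (1/2) * ((1/n : ℝ) * ∑ i, (if σ i then (1:ℝ) else -1) * p g i) +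
      (1/2) * ((1/n : ℝ) * ∑ i, (if σ i then (1:ℝ) else -1) * q g i) +
      (1/2) * ((1/n : ℝ) * ∑ i, (if σ i then (1:ℝ) else -1) * (-|p g i - q g i|)) := by
    have hmin : ∀ i, min (p g i) (q g i) = (p g i + q g i - |p g i - q g i|) / 2 := by
      intro i
      rcases le_total (p g i) (q g i) with h | h
      · rw [min_eq_left h, abs_of_nonpos (by linarith)]; ring
      · rw [min_eq_right h, abs_of_nonneg (by linarith)]; ring
    simp only [hmin, Finset.mul_sum]
    rw [← Finset.sum_add_distrib, ← Finset.sum_add_distrib]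
    exact Finset.sum_congr rfl fun i _ => by ring
  rw [key]
  have c2 : (0:ℝ) ≤ 1/2 := by norm_num
  exact add_le_add (add_le_add (mul_le_mul_of_nonneg_left h1 c2)
    (mul_le_mul_of_nonneg_left h2 c2)) (mul_le_mul_of_nonneg_left h3 c2)

end aux3

section aux4
variable {ι : Type*} [Fintype ι] [Nonempty ι] {n : ℕ}

lemma rad_eq_S (h : ι → Fin n → ℝ) : rad n h = (1 / 2 ^ n) * S n h := rfl

lemma rad_min₂ (p q : ι → Fin n → ℝ) :
    rad n (fun g i => min (p g i) (q g i)) ≤ rad n p + rad n q := by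
  have h0 : (0:ℝ) ≤ 1 / 2 ^ n := by positivity
  have hS := S_min_le_s6 p q
  have hneg : S n (fun g i => -|p g i - q g i|) = S n (fun g i => |p g i - q g i|) :=
    S_neg_eq (fun g i => |p g i - q g i|)
  have habs : S n (fun g i => |p g i - q g i|) ≤ S n (fun g i => p g i - q g i) :=
    S_abs_le (fun g i => p g i - q g i)
  have hsub : S n (fun g i => p g i - q g i) ≤ S n p + S n (fun g i => -(q g i)) :=
    S_sub_le p q
  have hnq : S n (fun g i => -(q g i)) = S n q := S_neg_eq q
  have hmain : S n (fun g i => min (p g i) (q g i)) ≤ S n p + S n q := by linarith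
  calc rad n (fun g i => min (p g i) (q g i))
      = (1 / 2 ^ n) * S n (fun g i => min (p g i) (q g i)) := rfl
    _ ≤ (1 / 2 ^ n) * (S n p + S n q) := mul_le_mul_of_nonneg_left hmain h0
    _ = rad n p + rad n q := by rw [mul_add]; rfl

lemma rad_inf'_le {κ : Type*} (s : Finset κ) (hs : s.Nonempty)
    (f : ι → Fin n → κ → ℝ) :
    rad n (fun g i => s.inf' hs (f g i)) ≤ ∑ y ∈ s, rad n (fun g i => f g i y) := by
  induction hs using Finset.Nonempty.cons_induction with
  | singleton a => simp [Finset.inf'_singleton]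
  | cons a s h hs ih =>
    have hrw : rad n (fun g i => (Finset.cons a s h).inf' (Finset.cons_nonempty h) (f g i)) =
        rad n (fun g i => min (f g i a) (s.inf' hs (f g i))) := by
      congr 1
      funext g i
      rw [Finset.inf'_cons]
    rw [Finset.sum_cons, hrw]
    exact le_trans (rad_min₂ (fun g i => f g i a) (fun g i => s.inf' hs (f g i)))
      (add_le_add_right ih _)

end aux4

/-- The general c-class case of Lemma 4: the Rademacher average of the pointwise
minimum over `c` per-label families is bounded by the sum of the per-label
Rademacher averages. -/
theorem rad_min_over_labels_le_sum
    (n c : ℕ) (hn : 0 < n) (hc : 0 < c) (ι : Type*) [Fintype ι] [Nonempty ι]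
    (f : ι → Fin n → Fin c → ℝ) :
    rad n (fun g i =>
        Finset.univ.inf' (Finset.univ_nonempty_iff.mpr (Fin.pos_iff_nonempty.mp hc))
          fun y => f g i y) ≤
      ∑ y : Fin c, rad n (fun g i => f g i y) := by
  exact rad_inf'_le Finset.univ (Finset.univ_nonempty_iff.mpr (Fin.pos_iff_nonempty.mp hc)) f
end

section
/- Let n and c be positive integers, let L ≥ 0, and let ℓ : EuclideanSpace ℝ (Fin c) → Fin c → ℝ be such that for every y ∈ Fin c the map v ↦ ℓ v y is Lipschitz with constant L with respect to the Euclidean norm. Let ι be a nonempty finite type, X a type, g : ι → X → EuclideanSpace ℝ (Fin c) a family of classifiers, and x : Fin n → X a sample. Then Rad(fun k i => min_{y ∈ Fin c} ℓ (g k (x i)) y) ≤ √2 · c · L · ∑_{y ∈ Fin c} Rad(fun k i => (g k (x i)) y), where for h : ι → Fin n → ℝ, Rad(h) := (1/2^n) · ∑_{σ : Fin n → Bool} max_{k ∈ ι} (1/n) · ∑_{i} ε_σ(i) · h k i, and ε_σ(i) = 1 if σ i = true and ε_σ(i) = −1 otherwise. -/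
open Finset

/-! ### Auxiliary definitions and lemmas -/

def sg (b : Bool) : ℝ := if b then 1 else -1

lemma sg_not (b : Bool) : sg (!b) = - sg b := by cases b <;> simp [sg]
lemma abs_sg (b : Bool) : |sg b| = 1 := by cases b <;> simp [sg]

lemma sup'_const_mul {ι : Type*} [Fintype ι] [Nonempty ι] (a : ℝ) (ha : 0 ≤ a) (f : ι → ℝ) :
    Finset.univ.sup' Finset.univ_nonempty (fun k => a * f k)
      = a * Finset.univ.sup' Finset.univ_nonempty f :=
  (Finset.comp_sup'_eq_sup'_comp _ (fun x => a * x) (fun x y => mul_max_of_nonneg x y ha)).symm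

lemma sup'_add_sup'_eq {ι : Type*} [Fintype ι] [Nonempty ι] (f g : ι → ℝ) :
    Finset.univ.sup' Finset.univ_nonempty f + Finset.univ.sup' Finset.univ_nonempty g
      = Finset.univ.sup' Finset.univ_nonempty (fun p : ι × ι => f p.1 + g p.2) := by
  apply le_antisymm
  · obtain ⟨k₁, _, h₁⟩ := Finset.exists_mem_eq_sup' (Finset.univ_nonempty (α := ι)) f
    obtain ⟨k₂, _, h₂⟩ := Finset.exists_mem_eq_sup' (Finset.univ_nonempty (α := ι)) g
    rw [h₁, h₂]
    exact Finset.le_sup' (f := fun p : ι × ι => f p.1 + g p.2) (Finset.mem_univ (k₁, k₂))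
  · apply Finset.sup'_le
    intro p _
    exact add_le_add (Finset.le_sup' f (Finset.mem_univ p.1)) (Finset.le_sup' g (Finset.mem_univ p.2))

lemma rad_eq {ι : Type*} [Fintype ι] [Nonempty ι] (n : ℕ) (h : ι → Fin n → ℝ) :
    rad n h = (1 / 2 ^ n) * ((1 / n : ℝ) *
      ∑ σ : Fin n → Bool, Finset.univ.sup' Finset.univ_nonempty
        (fun k => ∑ i, sg (σ i) * h k i)) := by
  rw [rad]
  have h1 : ∀ σ ∈ (Finset.univ : Finset (Fin n → Bool)),
      Finset.univ.sup' Finset.univ_nonempty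
        (fun k => (1 / n : ℝ) * ∑ i, (if σ i then (1:ℝ) else -1) * h k i)
      = (1 / n : ℝ) * Finset.univ.sup' Finset.univ_nonempty
        (fun k => ∑ i, sg (σ i) * h k i) := by
    intro σ _
    rw [← sup'_const_mul _ (by positivity : (0:ℝ) ≤ 1 / n)]
    rfl
  rw [Finset.sum_congr rfl h1, ← Finset.mul_sum]

lemma rad_nonneg {ι : Type*} [Fintype ι] [Nonempty ι] (n : ℕ) (h : ι → Fin n → ℝ) :
    0 ≤ rad n h := by
  rw [rad_eq]
  have key : 0 ≤ ∑ σ : Fin n → Bool, Finset.univ.sup' Finset.univ_nonempty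
      (fun k => ∑ i, sg (σ i) * h k i) := by
    have hflip : Function.Involutive (fun σ : Fin n → Bool => fun i => !σ i) := by
      intro σ; funext i; simp
    have hre : ∑ σ : Fin n → Bool, Finset.univ.sup' Finset.univ_nonempty
          (fun k => ∑ i, sg ((!σ ·) i) * h k i)
        = ∑ σ : Fin n → Bool, Finset.univ.sup' Finset.univ_nonempty
          (fun k => ∑ i, sg (σ i) * h k i) :=
      Equiv.sum_comp hflip.toPerm (fun σ => Finset.univ.sup' Finset.univ_nonempty
          (fun k => ∑ i, sg (σ i) * h k i))
    have pair : ∀ σ : Fin n → Bool,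
        0 ≤ Finset.univ.sup' Finset.univ_nonempty (fun k => ∑ i, sg (σ i) * h k i)
          + Finset.univ.sup' Finset.univ_nonempty (fun k => ∑ i, sg ((!σ ·) i) * h k i) := by
      intro σ
      have k₀ : ι := Classical.arbitrary ι
      have e1 : ∑ i, sg (σ i) * h k₀ i ≤ Finset.univ.sup' Finset.univ_nonempty
          (fun k => ∑ i, sg (σ i) * h k i) :=
        Finset.le_sup' (f := fun k => ∑ i, sg (σ i) * h k i) (Finset.mem_univ k₀)
      have e2 : ∑ i, sg ((!σ ·) i) * h k₀ i ≤ Finset.univ.sup' Finset.univ_nonempty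
          (fun k => ∑ i, sg ((!σ ·) i) * h k i) :=
        Finset.le_sup' (f := fun k => ∑ i, sg ((!σ ·) i) * h k i) (Finset.mem_univ k₀)
      have e3 : ∑ i, sg ((!σ ·) i) * h k₀ i = - ∑ i, sg (σ i) * h k₀ i := by
        rw [← Finset.sum_neg_distrib]
        exact Finset.sum_congr rfl fun i _ => by rw [sg_not]; ring
      rw [e3] at e2
      linarith
    have := Finset.sum_le_sum (fun σ (_ : σ ∈ (Finset.univ : Finset (Fin n → Bool))) => pair σ)
    rw [Finset.sum_add_distrib, hre, Finset.sum_const] at this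
    rw [smul_zero] at this
    linarith
  positivity

lemma abs_le_signed (c : ℕ) (u : Fin c → ℝ) (y : Fin c) :
    (2 ^ c : ℝ) * |u y| ≤ ∑ ρ : Fin c → Bool, |∑ z, sg (ρ z) * u z| := by
  have hinv : Function.Involutive (fun ρ : Fin c → Bool => Function.update ρ y (!ρ y)) := by
    intro ρ; funext z
    by_cases hz : z = y
    · subst hz; simp
    · simp [Function.update_apply, hz]
  have hre : ∑ ρ : Fin c → Bool, |∑ z, sg (Function.update ρ y (!ρ y) z) * u z|
      = ∑ ρ : Fin c → Bool, |∑ z, sg (ρ z) * u z| :=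
    Equiv.sum_comp hinv.toPerm (fun ρ => |∑ z, sg (ρ z) * u z|)
  have key : ∀ ρ : Fin c → Bool,
      (2:ℝ) * |u y| ≤ |∑ z, sg (ρ z) * u z| + |∑ z, sg (Function.update ρ y (!ρ y) z) * u z| := by
    intro ρ
    have hdiff : (∑ z, sg (ρ z) * u z) - ∑ z, sg (Function.update ρ y (!ρ y) z) * u z
        = 2 * sg (ρ y) * u y := by
      rw [← Finset.sum_sub_distrib]
      rw [Finset.sum_eq_single y]
      · rw [Function.update_self]; cases ρ y <;> simp [sg] <;> ring
      · intro z _ hz; rw [Function.update_of_ne hz]; ring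
      · intro h; exact absurd (Finset.mem_univ y) h
    calc (2:ℝ) * |u y| = |2 * sg (ρ y) * u y| := by
          rw [abs_mul, abs_mul, abs_sg, abs_two]; ring
      _ ≤ _ := by rw [← hdiff]; exact abs_sub _ _
  have hsum := Finset.sum_le_sum (fun ρ (_ : ρ ∈ (Finset.univ : Finset (Fin c → Bool))) => key ρ)
  rw [Finset.sum_add_distrib, hre, Finset.sum_const] at hsum
  have hcard : (Finset.univ : Finset (Fin c → Bool)).card = 2 ^ c := by
    simp [Fintype.card_fun]
  rw [hcard] at hsum
  have : ((2:ℕ) ^ c) • ((2:ℝ) * |u y|) = (2:ℝ)^c * (2 * |u y|) := by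
    simp [nsmul_eq_mul]
  rw [this] at hsum
  linarith

/-- The one-coordinate contraction step. -/
lemma step_lemma {ι : Type*} [Fintype ι] [Nonempty ι] {c : ℕ} (C : ℝ) (hC : 0 ≤ C)
    (φ : ι → ℝ) (a : ι → ℝ) (v : ι → Fin c → ℝ)
    (hf : ∀ k j : ι, (2 ^ c : ℝ) * (φ k - φ j)
      ≤ C * ∑ ρ : Fin c → Bool, |∑ y, sg (ρ y) * (v k y - v j y)|) :
    (2 ^ c : ℝ) * ∑ b : Bool, Finset.univ.sup' Finset.univ_nonempty (fun k => a k + sg b * φ k)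
      ≤ 2 * ∑ ρ : Fin c → Bool, Finset.univ.sup' Finset.univ_nonempty
          (fun k => a k + C * ∑ y, sg (ρ y) * v k y) := by
  set B : (Fin c → Bool) → ι → ℝ := fun ρ k => ∑ y, sg (ρ y) * v k y with hB
  have hbool : ∑ b : Bool, Finset.univ.sup' Finset.univ_nonempty (fun k => a k + sg b * φ k)
      = Finset.univ.sup' Finset.univ_nonempty (fun k => a k + φ k)
        + Finset.univ.sup' Finset.univ_nonempty (fun k => a k - φ k) := by
    rw [Fintype.sum_bool]
    congr 1
    · exact Finset.sup'_congr _ rfl (fun k _ => by simp [sg])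
    · exact Finset.sup'_congr _ rfl (fun k _ => by simp [sg]; ring)
  rw [hbool, sup'_add_sup'_eq]
  have hcardρ : ((Finset.univ : Finset (Fin c → Bool)).card : ℝ) = 2 ^ c := by
    simp [Fintype.card_fun]
  have main : (2 ^ c : ℝ) * Finset.univ.sup' Finset.univ_nonempty
      (fun p : ι × ι => (a p.1 + φ p.1) + (a p.2 - φ p.2))
      ≤ ∑ ρ : Fin c → Bool, (Finset.univ.sup' Finset.univ_nonempty (fun k => a k + C * B ρ k)
          + Finset.univ.sup' Finset.univ_nonempty (fun k => a k - C * B ρ k)) := by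
    rw [← sup'_const_mul _ (by positivity)]
    apply Finset.sup'_le
    rintro ⟨k, j⟩ _
    have h1 : (2 ^ c : ℝ) * ((a k + φ k) + (a j - φ j))
        ≤ ∑ ρ : Fin c → Bool, (a k + a j + C * |B ρ k - B ρ j|) := by
      rw [Finset.sum_add_distrib, Finset.sum_const, ← Finset.mul_sum]
      have h2 : ∀ ρ : Fin c → Bool, |∑ y, sg (ρ y) * (v k y - v j y)| = |B ρ k - B ρ j| := by
        intro ρ
        congr 1
        rw [hB]
        simp only
        rw [← Finset.sum_sub_distrib]
        exact Finset.sum_congr rfl fun y _ => by ring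
      have h3 := hf k j
      rw [Finset.sum_congr rfl (fun ρ _ => h2 ρ)] at h3
      rw [nsmul_eq_mul, hcardρ]
      nlinarith [h3]
    refine h1.trans (Finset.sum_le_sum fun ρ _ => ?_)
    rcases abs_cases (B ρ k - B ρ j) with ⟨he, _⟩ | ⟨he, _⟩
    · rw [he]
      have e1 : a k + C * B ρ k ≤ Finset.univ.sup' Finset.univ_nonempty
          (fun k => a k + C * B ρ k) :=
        Finset.le_sup' (f := fun k => a k + C * B ρ k) (Finset.mem_univ k)
      have e2 : a j - C * B ρ j ≤ Finset.univ.sup' Finset.univ_nonempty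
          (fun k => a k - C * B ρ k) :=
        Finset.le_sup' (f := fun k => a k - C * B ρ k) (Finset.mem_univ j)
      nlinarith
    · rw [he]
      have e1 : a j + C * B ρ j ≤ Finset.univ.sup' Finset.univ_nonempty
          (fun k => a k + C * B ρ k) :=
        Finset.le_sup' (f := fun k => a k + C * B ρ k) (Finset.mem_univ j)
      have e2 : a k - C * B ρ k ≤ Finset.univ.sup' Finset.univ_nonempty
          (fun k => a k - C * B ρ k) :=
        Finset.le_sup' (f := fun k => a k - C * B ρ k) (Finset.mem_univ k)
      nlinarith
  refine main.trans ?_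
  have hflip : Function.Involutive (fun ρ : Fin c → Bool => fun z => !ρ z) := by
    intro ρ; funext z; simp
  have hneg : ∑ ρ : Fin c → Bool, Finset.univ.sup' Finset.univ_nonempty
        (fun k => a k - C * B ρ k)
      = ∑ ρ : Fin c → Bool, Finset.univ.sup' Finset.univ_nonempty
        (fun k => a k + C * B ρ k) := by
    rw [← Equiv.sum_comp hflip.toPerm (fun ρ => Finset.univ.sup' Finset.univ_nonempty
        (fun k => a k + C * B ρ k))]
    apply Finset.sum_congr rfl
    intro ρ _
    apply Finset.sup'_congr _ rfl
    intro k _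
    have : B (fun z => !ρ z) k = - B ρ k := by
      rw [hB]
      simp only
      rw [← Finset.sum_neg_distrib]
      exact Finset.sum_congr rfl fun y _ => by rw [sg_not]; ring
    simp only [Function.Involutive.coe_toPerm, this]
    ring
  rw [Finset.sum_add_distrib, hneg]
  rw [← two_mul]

/-- Summing a function of one column of signs over all sign matrices. -/
lemma sum_slice {n c : ℕ} (y : Fin c) (F : (Fin n → Bool) → ℝ) :
    ∑ τ : Fin n → Fin c → Bool, F (fun i => τ i y)
      = (2 ^ (c - 1)) ^ n * ∑ σ : Fin n → Bool, F σ := by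
  classical
  let E : ((Fin n → Bool) × (Fin n → {z : Fin c // z ≠ y} → Bool)) ≃ (Fin n → Fin c → Bool) :=
    { toFun := fun p i z => if h : z = y then p.1 i else p.2 i ⟨z, h⟩
      invFun := fun τ => (fun i => τ i y, fun i z => τ i z.1)
      left_inv := by
        rintro ⟨σ, r⟩
        refine Prod.ext ?_ ?_
        · funext i; simp
        · funext i z; simp [z.2]
      right_inv := by
        intro τ; funext i z
        by_cases h : z = y
        · subst h; simp
        · simp [h] }
  have h1 : ∑ p : (Fin n → Bool) × (Fin n → {z : Fin c // z ≠ y} → Bool),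
      F (fun i => E p i y) = ∑ τ : Fin n → Fin c → Bool, F (fun i => τ i y) :=
    Equiv.sum_comp E (fun τ => F (fun i => τ i y))
  have h2 : ∀ p : (Fin n → Bool) × (Fin n → {z : Fin c // z ≠ y} → Bool),
      F (fun i => E p i y) = F p.1 := by
    intro p
    congr 1
    funext i
    show (if h : y = y then p.1 i else p.2 i ⟨y, h⟩) = p.1 i
    simp
  rw [← h1, Finset.sum_congr rfl (fun p _ => h2 p), Fintype.sum_prod_type]
  have h3 : ∀ σ : Fin n → Bool, ∑ _r : Fin n → {z : Fin c // z ≠ y} → Bool, F σ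
      = (2 ^ (c-1))^n * F σ := by
    intro σ
    rw [Finset.sum_const, nsmul_eq_mul]
    congr 1
    rw [Finset.card_univ, Fintype.card_fun, Fintype.card_fun]
    have hcs : Fintype.card {z : Fin c // z ≠ y} = c - 1 := by
      rw [Fintype.card_subtype_compl, Fintype.card_subtype_eq]
      simp
    rw [hcs]
    simp [pow_mul]
  rw [Finset.sum_congr rfl (fun σ _ => h3 σ), ← Finset.mul_sum]

/-- the min-loss is ℓ¹-Lipschitz -/
lemma minloss_l1_lipschitz (c : ℕ) (L : ℝ) (hL : 0 ≤ L)
    (ℓ : EuclideanSpace ℝ (Fin c) → Fin c → ℝ)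
    (hℓ : ∀ y : Fin c, LipschitzWith L.toNNReal (fun v => ℓ v y))
    (v w : EuclideanSpace ℝ (Fin c)) (H : (Finset.univ : Finset (Fin c)).Nonempty) :
    Finset.univ.inf' H (fun y => ℓ v y) - Finset.univ.inf' H (fun y => ℓ w y)
      ≤ L * ∑ y, |v y - w y| := by
  obtain ⟨y₀, _, hy₀⟩ := Finset.exists_mem_eq_inf' H (fun y => ℓ w y)
  have h1 : Finset.univ.inf' H (fun y => ℓ v y) ≤ ℓ v y₀ :=
    Finset.inf'_le _ (Finset.mem_univ y₀)
  have h2 : ℓ v y₀ - ℓ w y₀ ≤ L * dist v w := by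
    have := (hℓ y₀).dist_le_mul v w
    rw [Real.dist_eq] at this
    have hc : (L.toNNReal : ℝ) = L := Real.coe_toNNReal L hL
    rw [hc] at this
    calc ℓ v y₀ - ℓ w y₀ ≤ |ℓ v y₀ - ℓ w y₀| := le_abs_self _
      _ ≤ L * dist v w := this
  have h3 : dist v w ≤ ∑ y, |v y - w y| := by
    rw [EuclideanSpace.dist_eq]
    have hnn : ∀ y ∈ (Finset.univ : Finset (Fin c)), (0:ℝ) ≤ |v y - w y| :=
      fun y _ => abs_nonneg _
    have hsq : ∑ y, dist (v y) (w y) ^ 2 ≤ (∑ y, |v y - w y|) ^ 2 := by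
      have := Finset.sum_sq_le_sq_sum_of_nonneg hnn
      refine le_trans (le_of_eq ?_) this
      exact Finset.sum_congr rfl fun y _ => by rw [Real.dist_eq]
    calc Real.sqrt (∑ y, dist (v y) (w y) ^ 2) ≤ Real.sqrt ((∑ y, |v y - w y|) ^ 2) :=
          Real.sqrt_le_sqrt hsq
      _ = ∑ y, |v y - w y| := Real.sqrt_sq (Finset.sum_nonneg hnn)
  calc Finset.univ.inf' H (fun y => ℓ v y) - Finset.univ.inf' H (fun y => ℓ w y)
      ≤ ℓ v y₀ - ℓ w y₀ := by rw [hy₀] at *; linarith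
    _ ≤ L * dist v w := h2
    _ ≤ L * ∑ y, |v y - w y| := mul_le_mul_of_nonneg_left h3 hL

def pllTerm {ι : Type*} (n c : ℕ) (C : ℝ) (f : (Fin c → ℝ) → ℝ)
    (V : ι → Fin n → Fin c → ℝ) (m : ℕ) (σ : Fin n → Bool) (τ : Fin n → Fin c → Bool)
    (k : ι) : ℝ :=
  ∑ i : Fin n, if (i : ℕ) < m then C * ∑ y, sg (τ i y) * V k i y else sg (σ i) * f (V k i)

noncomputable def pllQ {ι : Type*} [Fintype ι] [Nonempty ι] (n c : ℕ) (C : ℝ)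
    (f : (Fin c → ℝ) → ℝ) (V : ι → Fin n → Fin c → ℝ) (m : ℕ) : ℝ :=
  ∑ σ : Fin n → Bool, ∑ τ : Fin n → Fin c → Bool,
    Finset.univ.sup' Finset.univ_nonempty (pllTerm n c C f V m σ τ)

lemma pllQ_step {ι : Type*} [Fintype ι] [Nonempty ι] {n c : ℕ} (C : ℝ) (hC : 0 ≤ C)
    (f : (Fin c → ℝ) → ℝ) (V : ι → Fin n → Fin c → ℝ)
    (hf : ∀ (i : Fin n) (k j : ι), (2 ^ c : ℝ) * (f (V k i) - f (V j i))
      ≤ C * ∑ ρ : Fin c → Bool, |∑ y, sg (ρ y) * (V k i y - V j i y)|)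
    (m : ℕ) (hm : m < n) :
    pllQ n c C f V m ≤ pllQ n c C f V (m + 1) := by
  classical
  set i₀ : Fin n := ⟨m, hm⟩ with hi₀
  set eS := Equiv.funSplitAt i₀ Bool with heS
  set eT := Equiv.funSplitAt i₀ (Fin c → Bool) with heT
  have hsplitS : ∀ F : (Fin n → Bool) → ℝ,
      ∑ σ, F σ = ∑ sr, ∑ b, F (eS.symm (b, sr)) := by
    intro F
    rw [← Equiv.sum_comp eS.symm F, Fintype.sum_prod_type]
    exact Finset.sum_comm
  have hsplitT : ∀ F : (Fin n → Fin c → Bool) → ℝ,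
      ∑ τ, F τ = ∑ tr, ∑ ρ, F (eT.symm (ρ, tr)) := by
    intro F
    rw [← Equiv.sum_comp eT.symm F, Fintype.sum_prod_type]
    exact Finset.sum_comm
  have hform : ∀ m' : ℕ, pllQ n c C f V m'
      = ∑ sr, ∑ tr, ∑ b, ∑ ρ, Finset.univ.sup' Finset.univ_nonempty
          (pllTerm n c C f V m' (eS.symm (b, sr)) (eT.symm (ρ, tr))) := by
    intro m'
    rw [pllQ, hsplitS]
    apply Finset.sum_congr rfl
    intro sr _
    rw [Finset.sum_comm,
      hsplitT (fun τ => ∑ b : Bool, Finset.univ.sup' Finset.univ_nonempty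
        (pllTerm n c C f V m' (eS.symm (b, sr)) τ))]
    apply Finset.sum_congr rfl
    intro tr _
    exact Finset.sum_comm
  rw [hform m, hform (m + 1)]
  apply Finset.sum_le_sum
  intro sr _
  apply Finset.sum_le_sum
  intro tr _
  set a : ι → ℝ := fun k => ∑ i ∈ Finset.univ.erase i₀,
      (if (i : ℕ) < m then C * ∑ y, sg (eT.symm (fun _ => true, tr) i y) * V k i y
        else sg (eS.symm (true, sr) i) * f (V k i)) with ha
  have hS0 : ∀ b, eS.symm (b, sr) i₀ = b := by intro b; simp [heS]
  have hS1 : ∀ (b) (i : Fin n) (h : i ≠ i₀), eS.symm (b, sr) i = sr ⟨i, h⟩ := by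
    intro b i h; simp [heS, h]
  have hT0 : ∀ ρ, eT.symm (ρ, tr) i₀ = ρ := by intro ρ; simp [heT]
  have hT1 : ∀ (ρ) (i : Fin n) (h : i ≠ i₀), eT.symm (ρ, tr) i = tr ⟨i, h⟩ := by
    intro ρ i h; simp [heT, h]
  have h1 : ∀ (b : Bool) (ρ : Fin c → Bool) (k : ι),
      pllTerm n c C f V m (eS.symm (b, sr)) (eT.symm (ρ, tr)) k
        = a k + sg b * f (V k i₀) := by
    intro b ρ k
    unfold pllTerm
    rw [← Finset.add_sum_erase _ _ (Finset.mem_univ i₀)]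
    rw [if_neg (show ¬ ((i₀ : ℕ) < m) from lt_irrefl m), hS0, add_comm]
    congr 1
    apply Finset.sum_congr rfl
    intro i hi
    have hne : i ≠ i₀ := Finset.ne_of_mem_erase hi
    by_cases him : (i : ℕ) < m
    · rw [if_pos him, if_pos him, hT1 ρ i hne, hT1 _ i hne]
    · rw [if_neg him, if_neg him, hS1 b i hne, hS1 true i hne]
  have h2 : ∀ (b : Bool) (ρ : Fin c → Bool) (k : ι),
      pllTerm n c C f V (m + 1) (eS.symm (b, sr)) (eT.symm (ρ, tr)) k
        = a k + C * ∑ y, sg (ρ y) * V k i₀ y := by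
    intro b ρ k
    unfold pllTerm
    rw [← Finset.add_sum_erase _ _ (Finset.mem_univ i₀)]
    rw [if_pos (show (i₀ : ℕ) < m + 1 from Nat.lt_succ_self m), hT0, add_comm]
    congr 1
    apply Finset.sum_congr rfl
    intro i hi
    have hne : i ≠ i₀ := Finset.ne_of_mem_erase hi
    have hvne : (i : ℕ) ≠ m := fun hh => hne (Fin.ext hh)
    by_cases him : (i : ℕ) < m
    · rw [if_pos him, if_pos (by omega : (i : ℕ) < m + 1), hT1 ρ i hne, hT1 _ i hne]
    · rw [if_neg him, if_neg (by omega : ¬ ((i : ℕ) < m + 1)), hS1 b i hne, hS1 true i hne]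
  have e1 : (∑ b : Bool, ∑ ρ : Fin c → Bool, Finset.univ.sup' Finset.univ_nonempty
        (pllTerm n c C f V m (eS.symm (b, sr)) (eT.symm (ρ, tr))))
      = (2 ^ c : ℝ) * ∑ b : Bool, Finset.univ.sup' Finset.univ_nonempty
        (fun k => a k + sg b * f (V k i₀)) := by
    rw [Finset.mul_sum]
    apply Finset.sum_congr rfl
    intro b _
    have : ∀ ρ ∈ (Finset.univ : Finset (Fin c → Bool)),
        Finset.univ.sup' Finset.univ_nonempty
          (pllTerm n c C f V m (eS.symm (b, sr)) (eT.symm (ρ, tr)))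
        = Finset.univ.sup' Finset.univ_nonempty (fun k => a k + sg b * f (V k i₀)) :=
      fun ρ _ => Finset.sup'_congr _ rfl (fun k _ => h1 b ρ k)
    rw [Finset.sum_congr rfl this, Finset.sum_const, nsmul_eq_mul, Finset.card_univ,
      Fintype.card_fun]
    push_cast
    simp
  have e2 : (∑ b : Bool, ∑ ρ : Fin c → Bool, Finset.univ.sup' Finset.univ_nonempty
        (pllTerm n c C f V (m + 1) (eS.symm (b, sr)) (eT.symm (ρ, tr))))
      = 2 * ∑ ρ : Fin c → Bool, Finset.univ.sup' Finset.univ_nonempty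
        (fun k => a k + C * ∑ y, sg (ρ y) * V k i₀ y) := by
    have hin : ∀ b : Bool, ∀ ρ ∈ (Finset.univ : Finset (Fin c → Bool)),
        Finset.univ.sup' Finset.univ_nonempty
          (pllTerm n c C f V (m + 1) (eS.symm (b, sr)) (eT.symm (ρ, tr)))
        = Finset.univ.sup' Finset.univ_nonempty
          (fun k => a k + C * ∑ y, sg (ρ y) * V k i₀ y) :=
      fun b ρ _ => Finset.sup'_congr _ rfl (fun k _ => h2 b ρ k)
    rw [Fintype.sum_bool, Finset.sum_congr rfl (hin true), Finset.sum_congr rfl (hin false)]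
    ring
  rw [e1, e2]
  exact step_lemma C hC (fun k => f (V k i₀)) a (fun k => V k i₀) (hf i₀)

lemma pllQ_zero {ι : Type*} [Fintype ι] [Nonempty ι] (n c : ℕ) (C : ℝ)
    (f : (Fin c → ℝ) → ℝ) (V : ι → Fin n → Fin c → ℝ) :
    pllQ n c C f V 0 = ((2:ℝ) ^ c) ^ n * ∑ σ : Fin n → Bool,
      Finset.univ.sup' Finset.univ_nonempty (fun k => ∑ i, sg (σ i) * f (V k i)) := by
  rw [pllQ, Finset.mul_sum]
  apply Finset.sum_congr rfl
  intro σ _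
  have hterm : ∀ τ ∈ (Finset.univ : Finset (Fin n → Fin c → Bool)),
      Finset.univ.sup' Finset.univ_nonempty (pllTerm n c C f V 0 σ τ)
      = Finset.univ.sup' Finset.univ_nonempty (fun k => ∑ i, sg (σ i) * f (V k i)) := by
    intro τ _
    apply Finset.sup'_congr _ rfl
    intro k _
    unfold pllTerm
    exact Finset.sum_congr rfl fun i _ => by rw [if_neg (Nat.not_lt_zero _)]
  rw [Finset.sum_congr rfl hterm, Finset.sum_const, nsmul_eq_mul, Finset.card_univ]
  congr 1
  rw [Fintype.card_fun, Fintype.card_fun]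
  push_cast
  simp [pow_mul]

lemma pllQ_last {ι : Type*} [Fintype ι] [Nonempty ι] (n c : ℕ) (C : ℝ) (hC : 0 ≤ C)
    (f : (Fin c → ℝ) → ℝ) (V : ι → Fin n → Fin c → ℝ) :
    pllQ n c C f V n ≤ (2:ℝ) ^ n * ((2:ℝ) ^ (c-1)) ^ n * C * ∑ y : Fin c,
      ∑ σ : Fin n → Bool, Finset.univ.sup' Finset.univ_nonempty
        (fun k => ∑ i, sg (σ i) * V k i y) := by
  rw [pllQ]
  have h0 : ∀ σ ∈ (Finset.univ : Finset (Fin n → Bool)),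
      (∑ τ : Fin n → Fin c → Bool, Finset.univ.sup' Finset.univ_nonempty
        (pllTerm n c C f V n σ τ))
      = ∑ τ : Fin n → Fin c → Bool, Finset.univ.sup' Finset.univ_nonempty
        (fun k => ∑ i, C * ∑ y, sg (τ i y) * V k i y) := by
    intro σ _
    apply Finset.sum_congr rfl
    intro τ _
    apply Finset.sup'_congr _ rfl
    intro k _
    unfold pllTerm
    exact Finset.sum_congr rfl fun i _ => by rw [if_pos i.isLt]
  rw [Finset.sum_congr rfl h0, Finset.sum_const, nsmul_eq_mul, Finset.card_univ]
  have hcard : ((Fintype.card (Fin n → Bool)):ℝ) = 2 ^ n := by simp [Fintype.card_fun]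
  rw [hcard]
  have key : (∑ τ : Fin n → Fin c → Bool, Finset.univ.sup' Finset.univ_nonempty
        (fun k => ∑ i, C * ∑ y, sg (τ i y) * V k i y))
      ≤ ((2:ℝ) ^ (c-1)) ^ n * C * ∑ y : Fin c, ∑ σ : Fin n → Bool,
        Finset.univ.sup' Finset.univ_nonempty (fun k => ∑ i, sg (σ i) * V k i y) := by
    have step1 : ∀ τ : Fin n → Fin c → Bool,
        Finset.univ.sup' Finset.univ_nonempty (fun k => ∑ i, C * ∑ y, sg (τ i y) * V k i y)
        ≤ ∑ y : Fin c, C * Finset.univ.sup' Finset.univ_nonempty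
            (fun k => ∑ i, sg (τ i y) * V k i y) := by
      intro τ
      apply Finset.sup'_le
      intro k _
      have hswap : ∑ i, C * ∑ y, sg (τ i y) * V k i y
          = ∑ y : Fin c, C * ∑ i, sg (τ i y) * V k i y := by
        rw [← Finset.mul_sum, ← Finset.mul_sum, Finset.sum_comm]
      rw [hswap]
      refine Finset.sum_le_sum fun y _ => mul_le_mul_of_nonneg_left ?_ hC
      exact Finset.le_sup' (f := fun k => ∑ i, sg (τ i y) * V k i y) (Finset.mem_univ k)
    calc (∑ τ : Fin n → Fin c → Bool, Finset.univ.sup' Finset.univ_nonempty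
          (fun k => ∑ i, C * ∑ y, sg (τ i y) * V k i y))
        ≤ ∑ τ : Fin n → Fin c → Bool, ∑ y : Fin c, C * Finset.univ.sup' Finset.univ_nonempty
            (fun k => ∑ i, sg (τ i y) * V k i y) :=
          Finset.sum_le_sum fun τ _ => step1 τ
      _ = ∑ y : Fin c, C * ∑ τ : Fin n → Fin c → Bool, Finset.univ.sup' Finset.univ_nonempty
            (fun k => ∑ i, sg (τ i y) * V k i y) := by
          rw [Finset.sum_comm]
          exact Finset.sum_congr rfl fun y _ => by rw [Finset.mul_sum]
      _ = ((2:ℝ) ^ (c-1)) ^ n * C * ∑ y : Fin c, ∑ σ : Fin n → Bool,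
            Finset.univ.sup' Finset.univ_nonempty (fun k => ∑ i, sg (σ i) * V k i y) := by
          rw [Finset.mul_sum]
          apply Finset.sum_congr rfl
          intro y _
          rw [sum_slice y (fun σ => Finset.univ.sup' Finset.univ_nonempty
            (fun k => ∑ i, sg (σ i) * V k i y))]
          ring
  calc (2:ℝ) ^ n * (∑ τ : Fin n → Fin c → Bool, Finset.univ.sup' Finset.univ_nonempty
        (fun k => ∑ i, C * ∑ y, sg (τ i y) * V k i y))
      ≤ (2:ℝ) ^ n * (((2:ℝ) ^ (c-1)) ^ n * C * ∑ y : Fin c, ∑ σ : Fin n → Bool,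
          Finset.univ.sup' Finset.univ_nonempty (fun k => ∑ i, sg (σ i) * V k i y)) :=
        mul_le_mul_of_nonneg_left key (by positivity)
    _ = _ := by ring


/-- Lemma 4 of the paper in empirical (fixed-sample) form: the Rademacher average
of the minimal-loss partial-label loss class is bounded by `√2 · c · L` times the
sum over labels of the Rademacher averages of the coordinate classes. -/
theorem rad_pll_loss_le_sqrt_two_c_L_sum
    (n c : ℕ) (hn : 0 < n) (hc : 0 < c) (L : ℝ) (hL : 0 ≤ L)
    (ℓ : EuclideanSpace ℝ (Fin c) → Fin c → ℝ)
    (hℓ : ∀ y : Fin c, LipschitzWith L.toNNReal (fun v => ℓ v y))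
    (ι : Type*) [Fintype ι] [Nonempty ι] (X : Type*)
    (g : ι → X → EuclideanSpace ℝ (Fin c)) (x : Fin n → X) :
    rad n (fun k i =>
        Finset.univ.inf' (Finset.univ_nonempty_iff.mpr (Fin.pos_iff_nonempty.mp hc))
          fun y => ℓ (g k (x i)) y) ≤
      Real.sqrt 2 * c * L * ∑ y : Fin c, rad n (fun k i => g k (x i) y) := by
  classical
  set hcne : (Finset.univ : Finset (Fin c)).Nonempty :=
    Finset.univ_nonempty_iff.mpr (Fin.pos_iff_nonempty.mp hc) with hhcne
  have hC0 : (0:ℝ) ≤ (c : ℝ) * L := mul_nonneg (Nat.cast_nonneg c) hL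
  -- the Lipschitz-type hypothesis for the contraction steps
  have hf : ∀ (i : Fin n) (k j : ι),
      (2 ^ c : ℝ) * ((Finset.univ.inf' hcne fun y => ℓ (g k (x i)) y)
          - (Finset.univ.inf' hcne fun y => ℓ (g j (x i)) y))
        ≤ (c : ℝ) * L * ∑ ρ : Fin c → Bool,
            |∑ y, sg (ρ y) * (g k (x i) y - g j (x i) y)| := by
    intro i k j
    have hlip : (Finset.univ.inf' hcne fun y => ℓ (g k (x i)) y)
        - (Finset.univ.inf' hcne fun y => ℓ (g j (x i)) y)
        ≤ L * ∑ y, |g k (x i) y - g j (x i) y| :=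
      minloss_l1_lipschitz c L hL ℓ hℓ (g k (x i)) (g j (x i)) hcne
    have hsg : ∀ y : Fin c, (2:ℝ) ^ c * |g k (x i) y - g j (x i) y|
        ≤ ∑ ρ : Fin c → Bool, |∑ z, sg (ρ z) * (g k (x i) z - g j (x i) z)| :=
      fun y => abs_le_signed c (fun z => g k (x i) z - g j (x i) z) y
    have hsum : (2:ℝ) ^ c * ∑ y, |g k (x i) y - g j (x i) y|
        ≤ (c : ℝ) * ∑ ρ : Fin c → Bool, |∑ z, sg (ρ z) * (g k (x i) z - g j (x i) z)| := by
      rw [Finset.mul_sum]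
      calc ∑ y : Fin c, (2:ℝ) ^ c * |g k (x i) y - g j (x i) y|
          ≤ ∑ _y : Fin c, ∑ ρ : Fin c → Bool,
              |∑ z, sg (ρ z) * (g k (x i) z - g j (x i) z)| :=
            Finset.sum_le_sum (fun y _ => hsg y)
        _ = (c : ℝ) * ∑ ρ : Fin c → Bool,
              |∑ z, sg (ρ z) * (g k (x i) z - g j (x i) z)| := by
            rw [Finset.sum_const, nsmul_eq_mul, Finset.card_univ, Fintype.card_fin]
    calc (2 ^ c : ℝ) * ((Finset.univ.inf' hcne fun y => ℓ (g k (x i)) y)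
          - (Finset.univ.inf' hcne fun y => ℓ (g j (x i)) y))
        ≤ (2:ℝ) ^ c * (L * ∑ y, |g k (x i) y - g j (x i) y|) :=
          mul_le_mul_of_nonneg_left hlip (by positivity)
      _ = L * ((2:ℝ) ^ c * ∑ y, |g k (x i) y - g j (x i) y|) := by ring
      _ ≤ L * ((c : ℝ) * ∑ ρ : Fin c → Bool,
            |∑ z, sg (ρ z) * (g k (x i) z - g j (x i) z)|) :=
          mul_le_mul_of_nonneg_left hsum hL
      _ = (c : ℝ) * L * ∑ ρ : Fin c → Bool,
            |∑ y, sg (ρ y) * (g k (x i) y - g j (x i) y)| := by ring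
  -- the chain of intermediate quantities
  have mono : pllQ n c ((c : ℝ) * L) (fun v => Finset.univ.inf' hcne fun y => ℓ (WithLp.toLp 2 v) y)
        (fun k i => g k (x i)) 0
      ≤ pllQ n c ((c : ℝ) * L) (fun v => Finset.univ.inf' hcne fun y => ℓ (WithLp.toLp 2 v) y)
        (fun k i => g k (x i)) n := by
    have hmono : ∀ m : ℕ, m ≤ n →
        pllQ n c ((c : ℝ) * L) (fun v => Finset.univ.inf' hcne fun y => ℓ (WithLp.toLp 2 v) y)
          (fun k i => g k (x i)) 0
        ≤ pllQ n c ((c : ℝ) * L) (fun v => Finset.univ.inf' hcne fun y => ℓ (WithLp.toLp 2 v) y)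
          (fun k i => g k (x i)) m := by
      intro m
      induction m with
      | zero => intro _; exact le_refl _
      | succ m ih =>
          intro hm
          exact (ih (Nat.le_of_succ_le hm)).trans
            (pllQ_step ((c : ℝ) * L) hC0 _ _ hf m hm)
    exact hmono n (le_refl n)
  have hzero : pllQ n c ((c : ℝ) * L) (fun v => Finset.univ.inf' hcne fun y => ℓ (WithLp.toLp 2 v) y)
        (fun k i => g k (x i)) 0
      = ((2:ℝ) ^ c) ^ n * ∑ σ : Fin n → Bool, Finset.univ.sup' Finset.univ_nonempty
          (fun k => ∑ i, sg (σ i) * (Finset.univ.inf' hcne fun y => ℓ (g k (x i)) y)) :=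
    pllQ_zero n c _ _ _
  have hlast : pllQ n c ((c : ℝ) * L) (fun v => Finset.univ.inf' hcne fun y => ℓ (WithLp.toLp 2 v) y)
        (fun k i => g k (x i)) n
      ≤ (2:ℝ) ^ n * ((2:ℝ) ^ (c-1)) ^ n * ((c : ℝ) * L) * ∑ y : Fin c,
          ∑ σ : Fin n → Bool, Finset.univ.sup' Finset.univ_nonempty
            (fun k => ∑ i, sg (σ i) * g k (x i) y) :=
    pllQ_last n c _ hC0 _ _
  have hpow : (2:ℝ) ^ n * ((2:ℝ) ^ (c-1)) ^ n = ((2:ℝ) ^ c) ^ n := by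
    rw [← mul_pow]
    congr 1
    rw [← pow_succ']
    congr 1
    omega
  have hstep : (∑ σ : Fin n → Bool, Finset.univ.sup' Finset.univ_nonempty
        (fun k => ∑ i, sg (σ i) * (Finset.univ.inf' hcne fun y => ℓ (g k (x i)) y)))
      ≤ (c : ℝ) * L * ∑ y : Fin c, ∑ σ : Fin n → Bool, Finset.univ.sup' Finset.univ_nonempty
          (fun k => ∑ i, sg (σ i) * g k (x i) y) := by
    have hP : (0:ℝ) < ((2:ℝ) ^ c) ^ n := by positivity
    have h' : ((2:ℝ) ^ c) ^ n * (∑ σ : Fin n → Bool, Finset.univ.sup' Finset.univ_nonempty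
          (fun k => ∑ i, sg (σ i) * (Finset.univ.inf' hcne fun y => ℓ (g k (x i)) y)))
        ≤ ((2:ℝ) ^ c) ^ n * ((c : ℝ) * L * ∑ y : Fin c, ∑ σ : Fin n → Bool,
            Finset.univ.sup' Finset.univ_nonempty
              (fun k => ∑ i, sg (σ i) * g k (x i) y)) := by
      calc ((2:ℝ) ^ c) ^ n * (∑ σ : Fin n → Bool, Finset.univ.sup' Finset.univ_nonempty
            (fun k => ∑ i, sg (σ i) * (Finset.univ.inf' hcne fun y => ℓ (g k (x i)) y)))
          ≤ (2:ℝ) ^ n * ((2:ℝ) ^ (c-1)) ^ n * ((c : ℝ) * L) * ∑ y : Fin c,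
              ∑ σ : Fin n → Bool, Finset.univ.sup' Finset.univ_nonempty
                (fun k => ∑ i, sg (σ i) * g k (x i) y) := by
            rw [← hzero]; exact mono.trans hlast
        _ = _ := by rw [← hpow]; ring
    exact le_of_mul_le_mul_left h' hP
  -- rewrite the goal in terms of the unnormalized sums
  have hsumrad : (0:ℝ) ≤ ∑ y : Fin c, rad n (fun k i => g k (x i) y) :=
    Finset.sum_nonneg fun y _ => rad_nonneg n _
  have hrady : ∀ y : Fin c, rad n (fun k i => g k (x i) y)
      = (1 / 2 ^ n) * ((1 / n : ℝ) * ∑ σ : Fin n → Bool,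
          Finset.univ.sup' Finset.univ_nonempty (fun k => ∑ i, sg (σ i) * g k (x i) y)) :=
    fun y => rad_eq n _
  have hradmin : rad n (fun k i => Finset.univ.inf' hcne fun y => ℓ (g k (x i)) y)
      = (1 / 2 ^ n) * ((1 / n : ℝ) * ∑ σ : Fin n → Bool,
          Finset.univ.sup' Finset.univ_nonempty
            (fun k => ∑ i, sg (σ i) * (Finset.univ.inf' hcne fun y => ℓ (g k (x i)) y))) :=
    rad_eq n _
  rw [hradmin]
  have hsum2 : ∑ y : Fin c, rad n (fun k i => g k (x i) y)
      = (1 / 2 ^ n) * ((1 / n : ℝ) * ∑ y : Fin c, ∑ σ : Fin n → Bool,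
          Finset.univ.sup' Finset.univ_nonempty (fun k => ∑ i, sg (σ i) * g k (x i) y)) := by
    rw [Finset.sum_congr rfl fun y _ => hrady y, ← Finset.mul_sum, ← Finset.mul_sum]
  have hs2 : (1:ℝ) ≤ Real.sqrt 2 := by
    nlinarith [Real.sq_sqrt (by norm_num : (0:ℝ) ≤ 2), Real.sqrt_nonneg 2]
  calc (1 / 2 ^ n) * ((1 / n : ℝ) * ∑ σ : Fin n → Bool,
        Finset.univ.sup' Finset.univ_nonempty
          (fun k => ∑ i, sg (σ i) * (Finset.univ.inf' hcne fun y => ℓ (g k (x i)) y)))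
      ≤ (1 / 2 ^ n) * ((1 / n : ℝ) * ((c : ℝ) * L * ∑ y : Fin c, ∑ σ : Fin n → Bool,
          Finset.univ.sup' Finset.univ_nonempty
            (fun k => ∑ i, sg (σ i) * g k (x i) y))) := by
        refine mul_le_mul_of_nonneg_left (mul_le_mul_of_nonneg_left hstep ?_) ?_
        · positivity
        · positivity
    _ = (c : ℝ) * L * ∑ y : Fin c, rad n (fun k i => g k (x i) y) := by
        rw [hsum2]; ring
    _ ≤ Real.sqrt 2 * c * L * ∑ y : Fin c, rad n (fun k i => g k (x i) y) := by
        nlinarith [mul_nonneg (mul_nonneg (sub_nonneg.mpr hs2) hC0) hsumrad]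
end

section
/- Let (Z, 𝒵) be a measurable space, μ a probability measure on Z, ι a nonempty finite type, M > 0, and φ : ι → Z → ℝ a family of measurable functions with |φ g z| ≤ M for all g ∈ ι and z ∈ Z. Let n be a positive integer. Then ∫ max_{g ∈ ι} (∫ φ g dμ − (1/n) · ∑_{i} φ g (z⃗ i)) d(μ^{⊗n})(z⃗) ≤ 2 · ∫ Rad(fun g i => φ g (z⃗ i)) d(μ^{⊗n})(z⃗), where μ^{⊗n} is the n-fold product measure on Fin n → Z. -/
open MeasureTheory Finset

section Helpers

private lemma integrable_of_bound {α : Type*} [MeasurableSpace α] (μ : Measure α)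
    [IsFiniteMeasure μ] {f : α → ℝ} (C : ℝ) (hf : Measurable f) (h : ∀ x, |f x| ≤ C) :
    Integrable f μ := by
  refine (integrable_const C).mono' hf.aestronglyMeasurable
    (Filter.Eventually.of_forall fun x => ?_)
  simpa using h x

private lemma measurable_sup'_fun {ι α : Type*} [Fintype ι] [Nonempty ι] [MeasurableSpace α]
    {f : ι → α → ℝ} (hf : ∀ g, Measurable (f g)) :
    Measurable fun x => Finset.univ.sup' Finset.univ_nonempty fun g => f g x := by
  have h := Finset.measurable_sup' (univ_nonempty (α := ι)) (fun g _ => hf g)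
  have heq : (Finset.univ.sup' univ_nonempty f)
      = fun x => Finset.univ.sup' Finset.univ_nonempty fun g => f g x := by
    funext x; exact Finset.sup'_apply _ _ _
  rwa [heq] at h

private lemma abs_sup'_le {ι : Type*} [Fintype ι] [Nonempty ι] {u : ι → ℝ} {C : ℝ}
    (h : ∀ g, |u g| ≤ C) : |Finset.univ.sup' Finset.univ_nonempty u| ≤ C := by
  rw [abs_le]
  constructor
  · obtain ⟨g0⟩ := (inferInstance : Nonempty ι)
    exact le_trans (neg_le_of_abs_le (h g0)) (Finset.le_sup' u (mem_univ g0))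
  · exact Finset.sup'_le _ _ fun g _ => le_of_abs_le (h g)

private lemma abs_avg_le {n : ℕ} (hn : 0 < n) {a : Fin n → ℝ} {C : ℝ}
    (h : ∀ i, |a i| ≤ C) : |(1 / n : ℝ) * ∑ i, a i| ≤ C := by
  have hn' : (0 : ℝ) < n := by exact_mod_cast hn
  rw [abs_mul]
  have h1 : |(1 / n : ℝ)| = 1 / n := abs_of_pos (by positivity)
  have h2 : |∑ i, a i| ≤ n * C := by
    calc |∑ i, a i| ≤ ∑ i, |a i| := Finset.abs_sum_le_sum_abs _ _
      _ ≤ ∑ _i : Fin n, C := Finset.sum_le_sum fun i _ => h i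
      _ = n * C := by simp [mul_comm]
  calc |(1 / n : ℝ)| * |∑ i, a i| ≤ (1 / n) * (n * C) := by
        rw [h1]; exact mul_le_mul_of_nonneg_left h2 (by positivity)
    _ = C := by field_simp

private lemma measurable_sup_avg {ι α : Type*} [Fintype ι] [Nonempty ι] [MeasurableSpace α]
    {n : ℕ} {ψ : ι → Fin n → α → ℝ} (hm : ∀ g i, Measurable (ψ g i)) :
    Measurable fun x => Finset.univ.sup' Finset.univ_nonempty fun g : ι =>
      (1 / n : ℝ) * ∑ i, ψ g i x :=
  measurable_sup'_fun fun g =>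
    (Finset.measurable_sum _ fun i _ => hm g i).const_mul _

private lemma integrable_sup_avg {ι α : Type*} [Fintype ι] [Nonempty ι] [MeasurableSpace α]
    (ρ : Measure α) [IsFiniteMeasure ρ] {n : ℕ} (hn : 0 < n) {ψ : ι → Fin n → α → ℝ} (C : ℝ)
    (hm : ∀ g i, Measurable (ψ g i)) (hb : ∀ g i x, |ψ g i x| ≤ C) :
    Integrable (fun x => Finset.univ.sup' Finset.univ_nonempty fun g : ι =>
      (1 / n : ℝ) * ∑ i, ψ g i x) ρ :=
  integrable_of_bound ρ C (measurable_sup_avg hm)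
    (fun x => abs_sup'_le fun g => abs_avg_le hn fun i => hb g i x)

private lemma sup'_integral_le {ι α : Type*} [Fintype ι] [Nonempty ι] [MeasurableSpace α]
    (μ : Measure α) {f : ι → α → ℝ} (hint : ∀ g, Integrable (f g) μ)
    (hsup : Integrable (fun x => Finset.univ.sup' Finset.univ_nonempty fun g => f g x) μ) :
    (Finset.univ.sup' Finset.univ_nonempty fun g => ∫ x, f g x ∂μ)
      ≤ ∫ x, Finset.univ.sup' Finset.univ_nonempty (fun g => f g x) ∂μ :=
  Finset.sup'_le _ _ fun g _ =>
    integral_mono (hint g) hsup fun x => Finset.le_sup' (fun g => f g x) (mem_univ g)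

private lemma map_eval_pi {Z : Type*} [MeasurableSpace Z] (μ : Measure Z)
    [IsProbabilityMeasure μ] (n : ℕ) (i : Fin n) :
    (Measure.pi fun _ : Fin n => μ).map (fun z => z i) = μ := by
  ext s hs
  rw [Measure.map_apply (measurable_pi_apply i) hs]
  have heq : ((fun z : Fin n → Z => z i) ⁻¹' s)
      = Set.pi Set.univ (Function.update (fun _ : Fin n => (Set.univ : Set Z)) i s) := by
    rw [show (fun z : Fin n → Z => z i) ⁻¹' s = Function.eval i ⁻¹' s from rfl,
      Set.eval_preimage]
  rw [heq, Measure.pi_pi]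
  rw [Finset.prod_eq_single i (fun j _ hj => by simp [Function.update_of_ne hj]) (by simp)]
  simp

end Helpers

/-- Symmetrization inequality (used in the proof of Lemma 3), for a finite
function class: the expected maximal deviation between population and empirical
means is at most twice the expected Rademacher average. -/
theorem symmetrization_inequality
    {Z : Type*} [MeasurableSpace Z] (μ : Measure Z) [IsProbabilityMeasure μ]
    (ι : Type*) [Fintype ι] [Nonempty ι]
    (M : ℝ) (hM : 0 < M)
    (φ : ι → Z → ℝ) (hmeas : ∀ g : ι, Measurable (φ g))
    (hbound : ∀ (g : ι) (z : Z), |φ g z| ≤ M)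
    (n : ℕ) (hn : 0 < n) :
    (∫ zvec, (Finset.univ.sup' Finset.univ_nonempty fun g : ι =>
          (∫ z, φ g z ∂μ) - (1 / n : ℝ) * ∑ i, φ g (zvec i))
        ∂(Measure.pi fun _ : Fin n => μ)) ≤
      2 * ∫ zvec, rad n (fun g i => φ g (zvec i))
        ∂(Measure.pi fun _ : Fin n => μ) := by
  classical
  set ν : Measure (Fin n → Z) := Measure.pi fun _ : Fin n => μ with hνdef
  set κ : Measure (Fin n → Z × Z) := Measure.pi fun _ : Fin n => μ.prod μ with hκdef
  haveI hνprob : IsProbabilityMeasure ν := by rw [hνdef]; infer_instance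
  haveI hκprob : IsProbabilityMeasure κ := by rw [hκdef]; infer_instance
  have hn' : (0 : ℝ) < n := by exact_mod_cast hn
  -- basic measurability
  have hcoz : ∀ (g : ι) (i : Fin n), Measurable fun z : Fin n → Z => φ g (z i) :=
    fun g i => (hmeas g).comp (measurable_pi_apply i)
  have hco1 : ∀ (g : ι) (i : Fin n), Measurable fun w : Fin n → Z × Z => φ g (w i).1 :=
    fun g i => (hmeas g).comp (measurable_fst.comp (measurable_pi_apply i))
  have hco2 : ∀ (g : ι) (i : Fin n), Measurable fun w : Fin n → Z × Z => φ g (w i).2 :=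
    fun g i => (hmeas g).comp (measurable_snd.comp (measurable_pi_apply i))
  -- bound on the population mean
  have hImean : ∀ g : ι, |∫ x, φ g x ∂μ| ≤ M := by
    intro g
    have h := norm_integral_le_of_norm_le_const (μ := μ) (C := M) (f := φ g)
      (Filter.Eventually.of_forall fun x => by
        rw [Real.norm_eq_abs]; exact hbound g x)
    simpa using h
  -- the two-sample function G and its one-sample versions
  set G : ((Fin n → Z) × (Fin n → Z)) → ℝ := fun p =>
    Finset.univ.sup' Finset.univ_nonempty fun g : ι =>
      (1 / n : ℝ) * ∑ i, (φ g (p.2 i) - φ g (p.1 i)) with hGdef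
  set H : (Fin n → Z × Z) → ℝ := fun w =>
    Finset.univ.sup' Finset.univ_nonempty fun g : ι =>
      (1 / n : ℝ) * ∑ i, (φ g (w i).2 - φ g (w i).1) with hHdef
  set Hσ : (Fin n → Bool) → (Fin n → Z × Z) → ℝ := fun σ w =>
    Finset.univ.sup' Finset.univ_nonempty fun g : ι =>
      (1 / n : ℝ) * ∑ i, (if σ i then (1:ℝ) else -1) * (φ g (w i).2 - φ g (w i).1) with hHσdef
  set P : (Fin n → Bool) → (Fin n → Z × Z) → ℝ := fun σ w =>
    Finset.univ.sup' Finset.univ_nonempty fun g : ι =>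
      (1 / n : ℝ) * ∑ i, (if σ i then (1:ℝ) else -1) * φ g (w i).2 with hPdef
  set Q : (Fin n → Bool) → (Fin n → Z × Z) → ℝ := fun σ w =>
    Finset.univ.sup' Finset.univ_nonempty fun g : ι =>
      (1 / n : ℝ) * ∑ i, (if (!σ i) then (1:ℝ) else -1) * φ g (w i).1 with hQdef
  set R : (Fin n → Bool) → (Fin n → Z) → ℝ := fun σ z =>
    Finset.univ.sup' Finset.univ_nonempty fun g : ι =>
      (1 / n : ℝ) * ∑ i, (if σ i then (1:ℝ) else -1) * φ g (z i) with hRdef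
  -- integrability facts
  have habs2 : ∀ (g : ι) (i : Fin n) (w : Fin n → Z × Z),
      |φ g (w i).2 - φ g (w i).1| ≤ 2 * M := fun g i w => by
    calc |φ g (w i).2 - φ g (w i).1| ≤ |φ g (w i).2| + |φ g (w i).1| := abs_sub _ _
      _ ≤ M + M := add_le_add (hbound _ _) (hbound _ _)
      _ = 2 * M := by ring
  have hsignmul : ∀ (b : Bool) (x : ℝ), |(if b then (1:ℝ) else -1) * x| = |x| := by
    intro b x; cases b <;> simp
  have hGint : Integrable G (ν.prod ν) := by
    rw [hGdef]
    exact integrable_sup_avg (ν.prod ν) hn (2 * M)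
      (fun g i => ((hmeas g).comp ((measurable_pi_apply i).comp measurable_snd)).sub
        ((hmeas g).comp ((measurable_pi_apply i).comp measurable_fst)))
      (fun g i p => by
        calc |φ g (p.2 i) - φ g (p.1 i)| ≤ |φ g (p.2 i)| + |φ g (p.1 i)| := abs_sub _ _
          _ ≤ M + M := add_le_add (hbound _ _) (hbound _ _)
          _ = 2 * M := by ring)
  have hHint : Integrable H κ := by
    rw [hHdef]
    exact integrable_sup_avg κ hn (2 * M)
      (fun g i => (hco2 g i).sub (hco1 g i)) (fun g i w => habs2 g i w)
  have hHσint : ∀ σ, Integrable (Hσ σ) κ := by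
    intro σ; rw [hHσdef]
    exact integrable_sup_avg κ hn (2 * M)
      (fun g i => (((hco2 g i).sub (hco1 g i)).const_mul _))
      (fun g i w => by rw [hsignmul]; exact habs2 g i w)
  have hPint : ∀ σ, Integrable (P σ) κ := by
    intro σ; rw [hPdef]
    exact integrable_sup_avg κ hn M (fun g i => ((hco2 g i).const_mul _))
      (fun g i w => by rw [hsignmul]; exact hbound _ _)
  have hQint : ∀ σ, Integrable (Q σ) κ := by
    intro σ; rw [hQdef]
    exact integrable_sup_avg κ hn M (fun g i => ((hco1 g i).const_mul _))
      (fun g i w => by rw [hsignmul]; exact hbound _ _)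
  have hRint : ∀ σ, Integrable (R σ) ν := by
    intro σ; rw [hRdef]
    exact integrable_sup_avg ν hn M (fun g i => ((hcoz g i).const_mul _))
      (fun g i z => by rw [hsignmul]; exact hbound _ _)
  have hRmeas : ∀ σ, Measurable (R σ) := by
    intro σ; rw [hRdef]
    exact measurable_sup_avg (fun g i => ((hcoz g i).const_mul _))
  have hFint : Integrable (fun z : Fin n → Z =>
      Finset.univ.sup' Finset.univ_nonempty fun g : ι =>
        (∫ x, φ g x ∂μ) - (1 / n : ℝ) * ∑ i, φ g (z i)) ν := by
    refine integrable_of_bound ν (2 * M)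
      (measurable_sup'_fun fun g => measurable_const.sub
        ((Finset.measurable_sum _ fun i _ => hcoz g i).const_mul _)) (fun z => ?_)
    refine abs_sup'_le fun g => ?_
    calc |(∫ x, φ g x ∂μ) - (1 / n : ℝ) * ∑ i, φ g (z i)|
        ≤ |∫ x, φ g x ∂μ| + |(1 / n : ℝ) * ∑ i, φ g (z i)| := abs_sub _ _
      _ ≤ M + M := add_le_add (hImean g) (abs_avg_le hn fun i => hbound _ _)
      _ = 2 * M := by ring
  -- Step 1: pointwise bound by the ghost-sample integral
  have h1 : ∀ z : Fin n → Z,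
      (Finset.univ.sup' Finset.univ_nonempty fun g : ι =>
        (∫ x, φ g x ∂μ) - (1 / n : ℝ) * ∑ i, φ g (z i)) ≤ ∫ z', G (z, z') ∂ν := by
    intro z
    have hfint : ∀ g : ι, Integrable
        (fun z' : Fin n → Z => (1 / n : ℝ) * ∑ i, (φ g (z' i) - φ g (z i))) ν := by
      intro g
      refine integrable_of_bound ν (2 * M)
        (((Finset.measurable_sum _ fun i _ => (hcoz g i).sub measurable_const)).const_mul _)
        (fun z' => abs_avg_le hn fun i => ?_)
      calc |φ g (z' i) - φ g (z i)| ≤ |φ g (z' i)| + |φ g (z i)| := abs_sub _ _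
        _ ≤ M + M := add_le_add (hbound _ _) (hbound _ _)
        _ = 2 * M := by ring
    have hkey : ∀ g : ι,
        (∫ x, φ g x ∂μ) - (1 / n : ℝ) * ∑ i, φ g (z i)
          = ∫ z', (1 / n : ℝ) * ∑ i, (φ g (z' i) - φ g (z i)) ∂ν := by
      intro g
      have heval : ∀ i : Fin n, ∫ z' : Fin n → Z, φ g (z' i) ∂ν = ∫ x, φ g x ∂μ := by
        intro i
        rw [← map_eval_pi μ n i, ← hνdef,
          integral_map (measurable_pi_apply i).aemeasurable
            (hmeas g).aestronglyMeasurable]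
      have hterm : ∀ i : Fin n, Integrable (fun z' : Fin n → Z => φ g (z' i) - φ g (z i)) ν :=
        fun i => (integrable_of_bound ν M (hcoz g i) fun z' => hbound _ _).sub
          (integrable_const _)
      rw [integral_const_mul, integral_finset_sum _ (fun i _ => hterm i)]
      have hterm2 : ∀ i : Fin n,
          ∫ z' : Fin n → Z, (φ g (z' i) - φ g (z i)) ∂ν
            = (∫ x, φ g x ∂μ) - φ g (z i) := by
        intro i
        rw [integral_sub (integrable_of_bound ν M (hcoz g i) fun z' => hbound _ _)
          (integrable_const _), heval i, integral_const]
        simp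
      rw [Finset.sum_congr rfl fun i _ => hterm2 i, Finset.sum_sub_distrib,
        Finset.sum_const, card_univ, Fintype.card_fin, nsmul_eq_mul, mul_sub]
      have : (1 / n : ℝ) * (n * ∫ x, φ g x ∂μ) = ∫ x, φ g x ∂μ := by
        field_simp
      rw [this]
    calc (Finset.univ.sup' Finset.univ_nonempty fun g : ι =>
          (∫ x, φ g x ∂μ) - (1 / n : ℝ) * ∑ i, φ g (z i))
        = Finset.univ.sup' Finset.univ_nonempty fun g : ι =>
            ∫ z', (1 / n : ℝ) * ∑ i, (φ g (z' i) - φ g (z i)) ∂ν :=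
          Finset.sup'_congr _ rfl fun g _ => hkey g
      _ ≤ ∫ z', (Finset.univ.sup' Finset.univ_nonempty fun g : ι =>
            (1 / n : ℝ) * ∑ i, (φ g (z' i) - φ g (z i))) ∂ν := by
          refine sup'_integral_le ν hfint ?_
          exact integrable_sup_avg ν hn (2 * M)
            (fun g i => (hcoz g i).sub measurable_const)
            (fun g i z' => by
              calc |φ g (z' i) - φ g (z i)| ≤ |φ g (z' i)| + |φ g (z i)| := abs_sub _ _
                _ ≤ M + M := add_le_add (hbound _ _) (hbound _ _)
                _ = 2 * M := by ring)
      _ = ∫ z', G (z, z') ∂ν := rfl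
  -- Step 2-3: integrate and apply Fubini
  have hGmarg : Integrable (fun z => ∫ z', G (z, z') ∂ν) ν := hGint.integral_prod_left
  have h2 : (∫ z, (Finset.univ.sup' Finset.univ_nonempty fun g : ι =>
        (∫ x, φ g x ∂μ) - (1 / n : ℝ) * ∑ i, φ g (z i)) ∂ν)
      ≤ ∫ z, (∫ z', G (z, z') ∂ν) ∂ν :=
    integral_mono hFint hGmarg h1
  have h3 : (∫ z, (∫ z', G (z, z') ∂ν) ∂ν) = ∫ p, G p ∂(ν.prod ν) := by
    have := integral_integral (μ := ν) (ν := ν) (f := fun z z' => G (z, z')) hGint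
    simpa using this
  -- Step 4: move to the paired space
  have h4 : (∫ p, G p ∂(ν.prod ν)) = ∫ w, H w ∂κ := by
    have mp : MeasurePreserving (MeasurableEquiv.arrowProdEquivProdArrow Z Z (Fin n))
        κ (ν.prod ν) := by
      rw [hκdef, hνdef]
      exact measurePreserving_arrowProdEquivProdArrow Z Z (Fin n) (fun _ => μ) (fun _ => μ)
    have hGmeas : Measurable G := by
      rw [hGdef]
      exact measurable_sup_avg (fun g i =>
        ((hmeas g).comp ((measurable_pi_apply i).comp measurable_snd)).sub
          ((hmeas g).comp ((measurable_pi_apply i).comp measurable_fst)))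
    calc (∫ p, G p ∂(ν.prod ν)) = ∫ p, G p ∂(κ.map (MeasurableEquiv.arrowProdEquivProdArrow Z Z (Fin n))) := by
          rw [mp.map_eq]
      _ = ∫ w, G ((MeasurableEquiv.arrowProdEquivProdArrow Z Z (Fin n)) w) ∂κ :=
          integral_map (MeasurableEquiv.arrowProdEquivProdArrow Z Z (Fin n)).measurable.aemeasurable
            hGmeas.aestronglyMeasurable
      _ = ∫ w, H w ∂κ := by congr 1
  -- Step 5: symmetrize using random signs
  have h5 : ∀ σ : Fin n → Bool, (∫ w, H w ∂κ) = ∫ w, Hσ σ w ∂κ := by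
    intro σ
    set S : (Fin n → Z × Z) → (Fin n → Z × Z) :=
      fun w i => (if σ i then id else Prod.swap) (w i) with hSdef
    have mpS : MeasurePreserving S κ κ := by
      rw [hκdef, hSdef]
      exact measurePreserving_pi (fun _ : Fin n => μ.prod μ) (fun _ => μ.prod μ)
        (fun i => by
          by_cases h : σ i
          · simp only [h, if_true]; exact MeasurePreserving.id _
          · simp only [h, if_false]; exact Measure.measurePreserving_swap)
    have hHmeas : Measurable H := by
      rw [hHdef]
      exact measurable_sup_avg (fun g i => (hco2 g i).sub (hco1 g i))
    calc (∫ w, H w ∂κ) = ∫ w, H w ∂(κ.map S) := by rw [mpS.map_eq]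
      _ = ∫ w, H (S w) ∂κ := integral_map mpS.measurable.aemeasurable hHmeas.aestronglyMeasurable
      _ = ∫ w, Hσ σ w ∂κ := by
          congr 1; funext w
          rw [hHdef, hHσdef]
          refine Finset.sup'_congr _ rfl fun g _ => ?_
          congr 1
          refine Finset.sum_congr rfl fun i _ => ?_
          by_cases h : σ i <;> simp [hSdef, h, neg_one_mul, neg_sub, Prod.swap]
  -- Step 6: pointwise splitting of the symmetrized sup
  have h6 : ∀ (σ : Fin n → Bool) (w : Fin n → Z × Z), Hσ σ w ≤ P σ w + Q σ w := by
    intro σ w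
    rw [hHσdef]
    refine Finset.sup'_le _ _ fun g _ => ?_
    have hsplit : (1 / n : ℝ) * ∑ i, (if σ i then (1:ℝ) else -1) * (φ g (w i).2 - φ g (w i).1)
        = (1 / n : ℝ) * ∑ i, (if σ i then (1:ℝ) else -1) * φ g (w i).2
          + (1 / n : ℝ) * ∑ i, (if (!σ i) then (1:ℝ) else -1) * φ g (w i).1 := by
      rw [← mul_add, ← Finset.sum_add_distrib]
      congr 1
      refine Finset.sum_congr rfl fun i _ => ?_
      by_cases h : σ i <;> simp [h] <;> try ring
    rw [hsplit]
    exact add_le_add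
      (Finset.le_sup' (fun g : ι => (1 / n : ℝ) * ∑ i, (if σ i then (1:ℝ) else -1) * φ g (w i).2)
        (mem_univ g))
      (Finset.le_sup' (fun g : ι => (1 / n : ℝ) * ∑ i, (if (!σ i) then (1:ℝ) else -1) * φ g (w i).1)
        (mem_univ g))
  have h7 : ∀ σ : Fin n → Bool, (∫ w, Hσ σ w ∂κ) ≤ (∫ w, P σ w ∂κ) + ∫ w, Q σ w ∂κ := by
    intro σ
    calc (∫ w, Hσ σ w ∂κ) ≤ ∫ w, (P σ w + Q σ w) ∂κ :=
          integral_mono (hHσint σ) ((hPint σ).add (hQint σ)) (h6 σ)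
      _ = (∫ w, P σ w ∂κ) + ∫ w, Q σ w ∂κ := integral_add (hPint σ) (hQint σ)
  -- Step 8: project to single samples
  have hmp2 : MeasurePreserving (fun w : Fin n → Z × Z => fun i => (w i).2) κ ν := by
    rw [hκdef, hνdef]
    exact measurePreserving_pi (fun _ : Fin n => μ.prod μ) (fun _ => μ)
      (fun i => ⟨measurable_snd, by simp [Measure.map_snd_prod]⟩)
  have hmp1 : MeasurePreserving (fun w : Fin n → Z × Z => fun i => (w i).1) κ ν := by
    rw [hκdef, hνdef]
    exact measurePreserving_pi (fun _ : Fin n => μ.prod μ) (fun _ => μ)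
      (fun i => ⟨measurable_fst, by simp [Measure.map_fst_prod]⟩)
  have h8 : ∀ σ : Fin n → Bool, (∫ w, P σ w ∂κ) = ∫ z, R σ z ∂ν := by
    intro σ
    refine Eq.symm ?_
    calc (∫ z, R σ z ∂ν) = ∫ z, R σ z ∂(κ.map (fun w : Fin n → Z × Z => fun i => (w i).2)) := by
          rw [hmp2.map_eq]
      _ = ∫ w, R σ (fun i => (w i).2) ∂κ :=
          integral_map hmp2.measurable.aemeasurable (hRmeas σ).aestronglyMeasurable
      _ = ∫ w, P σ w ∂κ := by rw [hRdef, hPdef]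
  have h8' : ∀ σ : Fin n → Bool, (∫ w, Q σ w ∂κ) = ∫ z, R (fun i => !σ i) z ∂ν := by
    intro σ
    refine Eq.symm ?_
    calc (∫ z, R (fun i => !σ i) z ∂ν)
        = ∫ z, R (fun i => !σ i) z ∂(κ.map (fun w : Fin n → Z × Z => fun i => (w i).1)) := by
          rw [hmp1.map_eq]
      _ = ∫ w, R (fun i => !σ i) (fun i => (w i).1) ∂κ :=
          integral_map hmp1.measurable.aemeasurable (hRmeas _).aestronglyMeasurable
      _ = ∫ w, Q σ w ∂κ := by rw [hRdef, hQdef]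
  -- Step 9: average over sign patterns
  have hcard : (Fintype.card (Fin n → Bool) : ℝ) = 2 ^ n := by simp
  have hpow : (0 : ℝ) < 2 ^ n := by positivity
  have hHavg : (∫ w, H w ∂κ) = (1 / 2 ^ n : ℝ) * ∑ σ : Fin n → Bool, ∫ w, Hσ σ w ∂κ := by
    rw [Finset.sum_congr rfl fun σ _ => (h5 σ).symm, Finset.sum_const, card_univ]
    rw [nsmul_eq_mul]
    rw [show ((Fintype.card (Fin n → Bool)) : ℝ) = 2 ^ n from hcard]
    field_simp
  have hnotsum : (∑ σ : Fin n → Bool, ∫ z, R (fun i => !σ i) z ∂ν)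
      = ∑ σ : Fin n → Bool, ∫ z, R σ z ∂ν := by
    apply Finset.sum_nbij' (fun σ => fun i => !σ i) (fun σ => fun i => !σ i)
      <;> intro σ _ <;> simp
  have hradint : (∫ z, rad n (fun g i => φ g (z i)) ∂ν)
      = (1 / 2 ^ n : ℝ) * ∑ σ : Fin n → Bool, ∫ z, R σ z ∂ν := by
    have : (fun z : Fin n → Z => rad n (fun g i => φ g (z i)))
        = fun z => (1 / 2 ^ n : ℝ) * ∑ σ : Fin n → Bool, R σ z := by
      funext z; rw [rad, hRdef]
    rw [this, integral_const_mul, integral_finset_sum _ (fun σ _ => hRint σ)]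
  -- final chain
  calc (∫ z, (Finset.univ.sup' Finset.univ_nonempty fun g : ι =>
        (∫ x, φ g x ∂μ) - (1 / n : ℝ) * ∑ i, φ g (z i)) ∂ν)
      ≤ ∫ z, (∫ z', G (z, z') ∂ν) ∂ν := h2
    _ = ∫ p, G p ∂(ν.prod ν) := h3
    _ = ∫ w, H w ∂κ := h4
    _ = (1 / 2 ^ n : ℝ) * ∑ σ : Fin n → Bool, ∫ w, Hσ σ w ∂κ := hHavg
    _ ≤ (1 / 2 ^ n : ℝ) * ∑ σ : Fin n → Bool, ((∫ z, R σ z ∂ν) + ∫ z, R (fun i => !σ i) z ∂ν) := by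
        refine mul_le_mul_of_nonneg_left (Finset.sum_le_sum fun σ _ => ?_) (by positivity)
        calc (∫ w, Hσ σ w ∂κ) ≤ (∫ w, P σ w ∂κ) + ∫ w, Q σ w ∂κ := h7 σ
          _ = (∫ z, R σ z ∂ν) + ∫ z, R (fun i => !σ i) z ∂ν := by rw [h8 σ, h8' σ]
    _ = (1 / 2 ^ n : ℝ) * (2 * ∑ σ : Fin n → Bool, ∫ z, R σ z ∂ν) := by
        rw [Finset.sum_add_distrib, hnotsum]; ring
    _ = 2 * ∫ z, rad n (fun g i => φ g (z i)) ∂ν := by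
        rw [hradint]; ring
end
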